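/- arXiv:2602.14126 — 8 statements merged into one kernel-verified Lean document; each statement's English description precedes it below -/
import Mathlib

section
/- For every natural number N, the Hamiltonian matrix H_N = (Q_N² + P_N²)/2 is diagonal, with diagonal entries H_{N;j,j} = j + 1/2 for j = 0, …, N−1 and H_{N;N,N} = N/2, and all off-diagonal entries zero. -/
open Matrix Polynomial

/-- Heisenberg's tridiagonal position matrix `Q_N` of size `(N+1) × (N+1)`:
`Q_{j,k} = (√(k+1)·δ_{j,k+1} + √k·δ_{j,k-1}) / √2`. -/
noncomputable def Qmat (N : ℕ) : Matrix (Fin (N+1)) (Fin (N+1)) ℂ :=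
  Matrix.of fun j k =>
    (((1 / Real.sqrt 2) *
        (Real.sqrt ((k : ℕ) + 1) * (if (j : ℕ) = (k : ℕ) + 1 then 1 else 0) +
         Real.sqrt (k : ℕ) * (if (j : ℕ) + 1 = (k : ℕ) then 1 else 0)) : ℝ) : ℂ)

/-- Heisenberg's tridiagonal momentum matrix `P_N` of size `(N+1) × (N+1)`:
`P_{j,k} = (i/√2)·(√(k+1)·δ_{j,k+1} − √k·δ_{j,k-1})`. -/
noncomputable def Pmat (N : ℕ) : Matrix (Fin (N+1)) (Fin (N+1)) ℂ :=
  Matrix.of fun j k =>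
    (Complex.I / (Real.sqrt 2 : ℂ)) *
      ((Real.sqrt ((k : ℕ) + 1) : ℂ) * (if (j : ℕ) = (k : ℕ) + 1 then 1 else 0) -
       (Real.sqrt (k : ℕ) : ℂ) * (if (j : ℕ) + 1 = (k : ℕ) then 1 else 0))

/-- The action difference `D_N = (Q_N P_N − P_N Q_N)/i`. -/
noncomputable def Dmat (N : ℕ) : Matrix (Fin (N+1)) (Fin (N+1)) ℂ :=
  Complex.I⁻¹ • (Qmat N * Pmat N - Pmat N * Qmat N)

private theorem keylem (N : ℕ) (j k m : Fin (N+1)) :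
    Qmat N j m * Qmat N m k + Pmat N j m * Pmat N m k =
      (if (j:ℕ) = (m:ℕ)+1 ∧ (m:ℕ)+1 = (k:ℕ) then ((m:ℕ)+1 : ℂ) else 0) +
      (if (j:ℕ)+1 = (m:ℕ) ∧ (m:ℕ) = (k:ℕ)+1 then ((m:ℕ) : ℂ) else 0) := by
  have h2 : ((Real.sqrt 2 : ℝ) : ℂ) ≠ 0 := by
    norm_cast; positivity
  have hsq : ∀ n : ℕ, ((Real.sqrt n : ℝ) : ℂ) * ((Real.sqrt n : ℝ) : ℂ) = (n : ℂ) := by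
    intro n; norm_cast
    rw [Real.mul_self_sqrt (by positivity)]
  have h22 : ((Real.sqrt 2 : ℝ) : ℂ) ^ 2 = 2 := by
    norm_cast; rw [Real.sq_sqrt] <;> norm_num
  have hmul : ∀ a b : ℕ, b = a + 1 →
      ((Real.sqrt (1 + (a:ℝ)) : ℝ) : ℂ) * ((Real.sqrt (b:ℝ) : ℝ) : ℂ) = (a:ℂ) + 1 := by
    intro a b hb; subst hb; push_cast
    rw [show (1:ℝ) + (a:ℝ) = (a:ℝ) + 1 by ring]
    norm_cast
    rw [Real.mul_self_sqrt (by positivity)]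
  simp only [Qmat, Pmat, Matrix.of_apply]
  push_cast
  split_ifs <;>
    (try omega) <;>
    field_simp <;>
    ring_nf <;>
    simp [Complex.I_sq, hsq] <;>
    ring_nf
  all_goals
    first
    | (have hk : (k:ℕ) = (m:ℕ)+1 := by omega
       rw [hmul m k hk, h22]; try ring)
    | (have hm : (m:ℕ) = (k:ℕ)+1 := by omega
       have hmc : ((m:ℕ):ℂ) = ((k:ℕ):ℂ)+1 := by exact_mod_cast hm
       rw [mul_comm ((Real.sqrt ((m:ℕ):ℝ) : ℝ) : ℂ), hmul k m hm, hmc, h22]; try ring)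

/-- The Hamiltonian `H_N = (Q_N² + P_N²)/2` is diagonal, with entries
`j + 1/2` for `j = 0, …, N−1` and `N/2` at position `(N,N)`. -/
theorem hamiltonian_diagonal (N : ℕ) :
    (2 : ℂ)⁻¹ • (Qmat N * Qmat N + Pmat N * Pmat N) =
      Matrix.diagonal (fun j : Fin (N+1) =>
        if j = Fin.last N then (N : ℂ) / 2 else (j : ℕ) + 1 / 2) := by
  ext j k
  rw [Matrix.smul_apply, Matrix.add_apply, Matrix.mul_apply, Matrix.mul_apply,
    ← Finset.sum_add_distrib, smul_eq_mul]
  rw [Finset.sum_congr rfl (fun m _ => keylem N j k m), Finset.sum_add_distrib]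
  rw [Fin.sum_univ_eq_sum_range
      (fun m => (if (j:ℕ) = m+1 ∧ m+1 = (k:ℕ) then ((m:ℕ)+1 : ℂ) else 0)),
    Fin.sum_univ_eq_sum_range
      (fun m => (if (j:ℕ)+1 = m ∧ m = (k:ℕ)+1 then ((m:ℕ) : ℂ) else 0))]
  by_cases hjk : j = k
  · subst hjk
    rw [Matrix.diagonal_apply_eq]
    have hS1 : (∑ m ∈ Finset.range (N+1),
        (if (j:ℕ) = m+1 ∧ m+1 = (j:ℕ) then ((m:ℕ)+1 : ℂ) else 0)) = ((j:ℕ) : ℂ) := by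
      rw [Finset.sum_eq_single ((j:ℕ) - 1)]
      · rcases Nat.eq_zero_or_pos (j:ℕ) with h0 | h0
        · rw [if_neg (by omega)]; rw [h0]; norm_num
        · rw [if_pos (by omega)]
          have : (j:ℕ) - 1 + 1 = (j:ℕ) := by omega
          exact_mod_cast congrArg (Nat.cast : ℕ → ℂ) this
      · intro b _ hb; rw [if_neg (by omega)]
      · intro h; exact absurd (Finset.mem_range.2 (by omega)) h
    by_cases hlast : j = Fin.last N
    · have hjN : (j:ℕ) = N := by rw [hlast]; simp
      have hS2 : (∑ m ∈ Finset.range (N+1),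
          (if (j:ℕ)+1 = m ∧ m = (j:ℕ)+1 then ((m:ℕ) : ℂ) else 0)) = 0 := by
        apply Finset.sum_eq_zero
        intro m hm
        rw [if_neg (by simp at hm; omega)]
      rw [hS1, hS2, if_pos hlast, hjN]
      ring
    · have hjN : (j:ℕ) < N := by
        by_contra h
        have hj : (j:ℕ) = N := by have := j.isLt; omega
        exact hlast (Fin.ext (by simp [Fin.val_last, hj]))
      have hS2 : (∑ m ∈ Finset.range (N+1),
          (if (j:ℕ)+1 = m ∧ m = (j:ℕ)+1 then ((m:ℕ) : ℂ) else 0)) = ((j:ℕ) : ℂ) + 1 := by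
        rw [Finset.sum_eq_single ((j:ℕ) + 1)]
        · rw [if_pos (by omega)]; push_cast; ring
        · intro b _ hb; rw [if_neg (by omega)]
        · intro h; exact absurd (Finset.mem_range.2 (by omega)) h
      rw [hS1, hS2, if_neg hlast]
      ring
  · have hv : (j:ℕ) ≠ (k:ℕ) := fun h => hjk (Fin.ext h)
    rw [Matrix.diagonal_apply_ne _ hjk]
    rw [Finset.sum_eq_zero (fun m _ => if_neg (by omega)),
        Finset.sum_eq_zero (fun m _ => if_neg (by omega))]
    ring
end

section
/- For every natural number N, the characteristic polynomial of the scaled position matrix √2·Q_N equals the probabilist's Hermite polynomial He_{N+1} (with coefficients mapped into ℂ); consequently the eigenvalues of Q_N are exactly the numbers μ/√2 where μ ranges over the roots of He_{N+1}. -/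
open Matrix Polynomial

/-- derivative of Hermite -/
lemma hermite_deriv_pair (n : ℕ) :
    derivative (hermite n) = C (n : ℤ) * hermite (n - 1) ∧
    derivative (hermite (n + 1)) = C ((n : ℤ) + 1) * hermite n := by
  induction n with
  | zero => simp [hermite_zero, hermite_one]
  | succ k ih =>
    have h2 := ih.2
    constructor
    · simpa using h2
    · rw [hermite_succ (k + 1), derivative_sub, derivative_mul, derivative_X, one_mul, h2,
        derivative_mul, derivative_C, ih.1, hermite_succ k, ih.1]
      push_cast
      simp only [map_add, _root_.map_one, map_ofNat]
      ring

lemma hermite_rec (n : ℕ) :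
    hermite (n + 2) = X * hermite (n + 1) - C ((n : ℤ) + 1) * hermite n := by
  rw [hermite_succ (n + 1), (hermite_deriv_pair n).2]

/-- The charmatrix of `√2 • Q_n`, written explicitly. -/
noncomputable def Tmat (n : ℕ) : Matrix (Fin (n+1)) (Fin (n+1)) ℂ[X] :=
  Matrix.of fun j k =>
    if (j : ℕ) = (k : ℕ) then X
    else if (j : ℕ) = (k : ℕ) + 1 then -C ((Real.sqrt ((k : ℕ) + 1) : ℝ) : ℂ)
    else if (j : ℕ) + 1 = (k : ℕ) then -C ((Real.sqrt (k : ℕ) : ℝ) : ℂ)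
    else 0

lemma Tmat_apply_nat {m n : ℕ} (j k : Fin (m+1)) (j' k' : Fin (n+1))
    (hj : (j : ℕ) = (j' : ℕ)) (hk : (k : ℕ) = (k' : ℕ)) :
    Tmat m j k = Tmat n j' k' := by
  simp only [Tmat, of_apply, hj, hk]

lemma detTmat_succ (n : ℕ) :
    (Tmat (n + 2)).det = X * (Tmat (n + 1)).det - C ((n : ℂ) + 2) * (Tmat n).det := by
  have sq2 : ((Real.sqrt ((n:ℝ) + 1 + 1) : ℝ) : ℂ) * ((Real.sqrt ((n:ℝ) + 1 + 1) : ℝ) : ℂ)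
      = ((n : ℂ) + 2) := by
    rw [← Complex.ofReal_mul, Real.mul_self_sqrt (by positivity)]
    push_cast; ring
  rw [Matrix.det_succ_row (Tmat (n + 2)) (Fin.last (n + 2))]
  rw [Fin.sum_univ_castSucc, Fin.sum_univ_castSucc]
  have hz : ∀ j : Fin (n + 1),
      (-1 : ℂ[X]) ^ ((Fin.last (n + 2) : ℕ) + ((j.castSucc.castSucc : Fin (n+3)) : ℕ)) *
        Tmat (n + 2) (Fin.last (n + 2)) j.castSucc.castSucc *
        ((Tmat (n + 2)).submatrix (Fin.last (n + 2)).succAbove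
          (j.castSucc.castSucc).succAbove).det = 0 := by
    intro j
    have hj : (j : ℕ) < n + 1 := j.is_lt
    have h0 : Tmat (n + 2) (Fin.last (n + 2)) j.castSucc.castSucc = 0 := by
      simp only [Tmat, of_apply, Fin.val_last, Fin.coe_castSucc]
      split_ifs <;> first | (exfalso; omega) | rfl | norm_cast
    rw [h0, mul_zero, zero_mul]
  rw [Finset.sum_congr rfl (fun j _ => hz j), Finset.sum_const_zero, zero_add]
  have hlast : (Fin.last (n + 2)).succAbove = Fin.castSucc := Fin.succAbove_last
  -- the diagonal (last) term
  have hTdiag : Tmat (n + 2) (Fin.last (n + 2)) (Fin.last (n + 2)) = X := by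
    simp [Tmat]
  have hsub_diag : (Tmat (n + 2)).submatrix (Fin.last (n + 2)).succAbove
      (Fin.last (n + 2)).succAbove = Tmat (n + 1) := by
    refine Matrix.ext fun r c => ?_
    rw [Matrix.submatrix_apply, hlast]
    exact Tmat_apply_nat _ _ r c rfl rfl
  -- the subdiagonal term
  set j₀ : Fin (n + 3) := (Fin.last (n + 1)).castSucc with hj₀
  have hj₀v : (j₀ : ℕ) = n + 1 := by simp [hj₀]
  have hTsub : Tmat (n + 2) (Fin.last (n + 2)) j₀
      = -C ((Real.sqrt ((n:ℝ) + 1 + 1) : ℝ) : ℂ) := by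
    simp only [Tmat, of_apply, Fin.val_last, hj₀, Fin.coe_castSucc]
    split_ifs <;> first | (exfalso; omega) | rfl | norm_cast
  set B : Matrix (Fin (n + 2)) (Fin (n + 2)) ℂ[X] :=
    (Tmat (n + 2)).submatrix Fin.castSucc j₀.succAbove with hB
  have hdetB : B.det = -C ((Real.sqrt ((n:ℝ) + 1 + 1) : ℝ) : ℂ) * (Tmat n).det := by
    rw [Matrix.det_succ_column B (Fin.last (n + 1)), Fin.sum_univ_castSucc]
    have hcol : j₀.succAbove (Fin.last (n + 1)) = Fin.last (n + 2) := by
      rw [hj₀, Fin.succAbove_castSucc_self, Fin.succ_last]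
    have hz2 : ∀ i : Fin (n + 1),
        (-1 : ℂ[X]) ^ (((i.castSucc : Fin (n+2)) : ℕ) + ((Fin.last (n + 1) : Fin (n+2)) : ℕ)) *
          B i.castSucc (Fin.last (n + 1)) *
          (B.submatrix (i.castSucc).succAbove (Fin.last (n + 1)).succAbove).det = 0 := by
      intro i
      have hi : (i : ℕ) < n + 1 := i.is_lt
      have h0 : B i.castSucc (Fin.last (n + 1)) = 0 := by
        rw [hB, Matrix.submatrix_apply, hcol]
        simp only [Tmat, of_apply, Fin.coe_castSucc, Fin.val_last]
        split_ifs <;> first | (exfalso; omega) | rfl | norm_cast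
      rw [h0, mul_zero, zero_mul]
    rw [Finset.sum_congr rfl (fun i _ => hz2 i), Finset.sum_const_zero, zero_add]
    have hBlast : B (Fin.last (n + 1)) (Fin.last (n + 1))
        = -C ((Real.sqrt ((n:ℝ) + 1 + 1) : ℝ) : ℂ) := by
      rw [hB, Matrix.submatrix_apply, hcol]
      simp only [Tmat, of_apply, Fin.coe_castSucc, Fin.val_last]
      split_ifs <;> first | (exfalso; omega) | rfl | norm_cast
    have hBsub : B.submatrix (Fin.last (n + 1)).succAbove (Fin.last (n + 1)).succAbove
        = Tmat n := by
      refine Matrix.ext fun r c => ?_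
      rw [Matrix.submatrix_apply, Fin.succAbove_last, hB, Matrix.submatrix_apply]
      have harg : j₀.succAbove (Fin.castSucc c) = (Fin.castSucc c).castSucc := by
        rw [hj₀, Fin.succAbove_castSucc_of_lt]
        exact Fin.castSucc_lt_last c
      rw [harg]
      exact Tmat_apply_nat _ _ r c rfl rfl
    rw [hBlast, hBsub]
    have he : (-1 : ℂ[X]) ^ (((Fin.last (n+1) : Fin (n+2)).castSucc : ℕ)
        + ((Fin.last (n + 1) : Fin (n+2)) : ℕ)) = 1 := by
      simp only [Fin.val_last, Fin.coe_castSucc]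
      exact Even.neg_one_pow ⟨n + 1, by ring⟩
    simp only [Fin.val_last]
    rw [show (-1 : ℂ[X]) ^ (n + 1 + (n + 1)) = 1 from Even.neg_one_pow ⟨n + 1, by ring⟩, one_mul]
  -- combine
  rw [hTdiag, hsub_diag, hTsub, hlast, ← hB, hdetB]
  simp only [Fin.val_last, hj₀, Fin.coe_castSucc]
  rw [show (-1 : ℂ[X]) ^ (n + 2 + (n + 1)) = -1 from Odd.neg_one_pow ⟨n + 1, by ring⟩,
    show (-1 : ℂ[X]) ^ (n + 2 + (n + 2)) = 1 from Even.neg_one_pow ⟨n + 2, by ring⟩,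
    one_mul, ← sq2, C_mul]
  ring

lemma detTmat_zero : (Tmat 0).det = X := by
  rw [Matrix.det_fin_one]
  simp [Tmat]

lemma detTmat_one : (Tmat 1).det = X * X - 1 := by
  rw [Matrix.det_fin_two]
  have h00 : Tmat 1 0 0 = X := by simp [Tmat]
  have h11 : Tmat 1 1 1 = X := by simp [Tmat]
  have h01 : Tmat 1 0 1 = -1 := by
    simp [Tmat, Real.sqrt_one]
  have h10 : Tmat 1 1 0 = -1 := by
    simp [Tmat, Real.sqrt_one]
  rw [h00, h11, h01, h10]
  ring

lemma Hmap_rec (n : ℕ) :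
    (hermite (n + 2)).map (Int.castRingHom ℂ) =
      X * (hermite (n + 1)).map (Int.castRingHom ℂ)
        - C ((n : ℂ) + 1) * (hermite n).map (Int.castRingHom ℂ) := by
  rw [hermite_rec n, Polynomial.map_sub, Polynomial.map_mul, Polynomial.map_mul,
    Polynomial.map_X, map_C]
  norm_num

lemma detTmat (n : ℕ) : (Tmat n).det = (hermite (n + 1)).map (Int.castRingHom ℂ) := by
  have key : ∀ m : ℕ, (Tmat m).det = (hermite (m + 1)).map (Int.castRingHom ℂ) ∧
      (Tmat (m + 1)).det = (hermite (m + 2)).map (Int.castRingHom ℂ) := by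
    intro m
    induction m with
    | zero =>
      constructor
      · rw [detTmat_zero, hermite_one, Polynomial.map_X]
      · rw [detTmat_one]
        rw [show (2 : ℕ) = 0 + 2 from rfl, Hmap_rec 0, hermite_one, hermite_zero]
        simp
    | succ k ih =>
      refine ⟨ih.2, ?_⟩
      rw [detTmat_succ k, ih.1, ih.2, show k + 1 + 2 = (k + 1) + 2 from rfl, Hmap_rec (k + 1)]
      push_cast
      ring
  exact (key n).1

lemma charmatrix_eq (N : ℕ) :
    charmatrix (((Real.sqrt 2 : ℂ)) • Qmat N) = Tmat N := by
  have h2 : (Real.sqrt 2 : ℝ) ≠ 0 := by positivity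
  refine Matrix.ext fun j k => ?_
  by_cases h : j = k
  · subst h
    rw [charmatrix_apply_eq]
    have hq : (((Real.sqrt 2 : ℂ)) • Qmat N) j j = 0 := by
      simp only [Matrix.smul_apply, Qmat, of_apply, smul_eq_mul]
      rw [if_neg (by omega), if_neg (by omega)]
      push_cast
      ring
    rw [hq, map_zero, sub_zero]
    simp [Tmat]
  · rw [charmatrix_apply_ne _ _ _ h]
    have hjk : (j : ℕ) ≠ (k : ℕ) := fun hv => h (Fin.ext hv)
    simp only [Matrix.smul_apply, Qmat, of_apply, smul_eq_mul, Tmat]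
    rw [if_neg hjk]
    by_cases h1 : (j : ℕ) = (k : ℕ) + 1
    · rw [if_pos h1, if_pos h1, if_neg (show ¬((j:ℕ) + 1 = (k:ℕ)) by omega)]
      congr 2
      rw [← Complex.ofReal_mul]; congr 1
      field_simp
      ring
    · rw [if_neg h1, if_neg h1]
      by_cases h3 : (j : ℕ) + 1 = (k : ℕ)
      · rw [if_pos h3, if_pos h3]
        congr 2
        rw [← Complex.ofReal_mul]; congr 1
        field_simp
        ring
      · rw [if_neg h3, if_neg h3]
        push_cast
        norm_num

lemma charpoly_eq (N : ℕ) :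
    (((Real.sqrt 2 : ℂ)) • Qmat N).charpoly =
      (hermite (N + 1)).map (Int.castRingHom ℂ) := by
  rw [Matrix.charpoly, charmatrix_eq, detTmat]

lemma eval_charpoly_matrix {n : ℕ} (M : Matrix (Fin n) (Fin n) ℂ) (x : ℂ) :
    M.charpoly.eval x = (Matrix.scalar (Fin n) x - M).det := by
  rw [Matrix.charpoly, ← Polynomial.coe_evalRingHom, RingHom.map_det]
  congr 1
  refine Matrix.ext fun i j => ?_
  by_cases h : i = j
  · subst h
    rw [RingHom.mapMatrix_apply, Matrix.map_apply, charmatrix_apply_eq]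
    simp [Matrix.scalar_apply, Matrix.sub_apply, Matrix.diagonal_apply_eq]
  · rw [RingHom.mapMatrix_apply, Matrix.map_apply, charmatrix_apply_ne _ _ _ h]
    simp [Matrix.scalar_apply, Matrix.sub_apply, Matrix.diagonal_apply_ne _ h]

lemma mem_spectrum_iff_charpoly {n : ℕ} (M : Matrix (Fin n) (Fin n) ℂ) (x : ℂ) :
    x ∈ spectrum ℂ M ↔ M.charpoly.IsRoot x := by
  rw [spectrum.mem_iff, Matrix.isUnit_iff_isUnit_det, isUnit_iff_ne_zero, not_not,
    IsRoot, eval_charpoly_matrix]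
  rfl

lemma eval_scale (N : ℕ) (x : ℂ) :
    (((Real.sqrt 2 : ℂ)) • Qmat N).charpoly.eval ((Real.sqrt 2 : ℂ) * x) =
      ((Real.sqrt 2 : ℂ)) ^ (N + 1) * (Qmat N).charpoly.eval x := by
  rw [eval_charpoly_matrix, eval_charpoly_matrix]
  have hsm : Matrix.scalar (Fin (N+1)) ((Real.sqrt 2 : ℂ) * x) - ((Real.sqrt 2 : ℂ)) • Qmat N
      = ((Real.sqrt 2 : ℂ)) • (Matrix.scalar (Fin (N+1)) x - Qmat N) := by
    rw [smul_sub]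
    congr 1
    refine Matrix.ext fun i j => ?_
    simp [Matrix.scalar_apply, Matrix.diagonal_apply, Matrix.smul_apply, mul_ite]
  rw [hsm, Matrix.det_smul]
  simp

/-- the characteristic polynomial of `√2·Q_N` is the probabilist's Hermite
polynomial `He_{N+1}` (mapped into `ℂ`); consequently the eigenvalues of `Q_N` are exactly
the numbers `μ/√2` with `μ` a root of `He_{N+1}`. -/
theorem charpoly_sqrt_two_smul_Qmat (N : ℕ) :
    (((Real.sqrt 2 : ℂ)) • Qmat N).charpoly =
      (Polynomial.hermite (N + 1)).map (Int.castRingHom ℂ) ∧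
    ∀ x : ℂ, x ∈ spectrum ℂ (Qmat N) ↔
      ∃ μ : ℂ, ((Polynomial.hermite (N + 1)).map (Int.castRingHom ℂ)).IsRoot μ ∧
        x = μ / (Real.sqrt 2 : ℂ) := by
  have hch := charpoly_eq N
  have hs2 : ((Real.sqrt 2 : ℝ) : ℂ) ≠ 0 := Complex.ofReal_ne_zero.mpr (by positivity)
  refine ⟨hch, fun x => ?_⟩
  rw [mem_spectrum_iff_charpoly]
  constructor
  · intro hr
    refine ⟨(Real.sqrt 2 : ℂ) * x, ?_, by field_simp⟩
    rw [← hch, IsRoot, eval_scale, hr]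
    ring
  · rintro ⟨μ, hμ, rfl⟩
    have hx : (Real.sqrt 2 : ℂ) * (μ / (Real.sqrt 2 : ℂ)) = μ := by field_simp
    have h0 : (((Real.sqrt 2 : ℂ)) • Qmat N).charpoly.eval
        ((Real.sqrt 2 : ℂ) * (μ / (Real.sqrt 2 : ℂ))) = 0 := by
      rw [hx, hch]; exact hμ
    rw [eval_scale] at h0
    rcases mul_eq_zero.mp h0 with h | h
    · exact absurd h (pow_ne_zero _ hs2)
    · exact h
end

section
/- For every natural number N, the characteristic polynomials of the momentum matrix P_N and the position matrix Q_N coincide; hence Q_N and P_N have identical spectra. -/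
open Matrix Polynomial

lemma charpoly_units_conj' {n : Type*} [DecidableEq n] [Fintype n]
    {R : Type*} [CommRing R] (U : (Matrix n n R)ˣ) (A : Matrix n n R) :
    (U.val * A * U⁻¹.val).charpoly = A.charpoly := by
  let U' : (Matrix n n R[X])ˣ :=
    Units.map ((C : R →+* R[X]).mapMatrix : Matrix n n R →+* Matrix n n R[X]).toMonoidHom U
  have hU' : U'.val = U.val.map C := rfl
  have hU'inv : U'⁻¹.val = U⁻¹.val.map C := rfl
  have hcm : charmatrix (U.val * A * U⁻¹.val) = U'.val * charmatrix A * U'⁻¹.val := by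
    unfold charmatrix
    rw [mul_sub, sub_mul, hU', hU'inv]
    congr 1
    · have hc : (Matrix.scalar n (X : R[X])) * (U⁻¹.val.map C)
          = (U⁻¹.val.map C) * (Matrix.scalar n (X : R[X])) := by
        rw [Matrix.scalar_commute]
        intro r; exact Commute.all X r
      rw [mul_assoc, hc, ← mul_assoc, ← Matrix.map_mul]
      rw [show U.val * U⁻¹.val = 1 by simpa using U.mul_inv]
      simp
    · simp only [RingHom.mapMatrix_apply, Matrix.map_mul]
  rw [Matrix.charpoly, Matrix.charpoly, hcm, Matrix.det_units_conj]

/-- The diagonal unitary `diag(i^j)` as a unit. -/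
noncomputable def Umat (N : ℕ) : (Matrix (Fin (N+1)) (Fin (N+1)) ℂ)ˣ where
  val := Matrix.diagonal fun j => Complex.I ^ (j : ℕ)
  inv := Matrix.diagonal fun j => (Complex.I ^ (j : ℕ))⁻¹
  val_inv := by
    rw [Matrix.diagonal_mul_diagonal]
    convert Matrix.diagonal_one
    exact mul_inv_cancel₀ (pow_ne_zero _ Complex.I_ne_zero)
  inv_val := by
    rw [Matrix.diagonal_mul_diagonal]
    convert Matrix.diagonal_one
    exact inv_mul_cancel₀ (pow_ne_zero _ Complex.I_ne_zero)

lemma conj_Qmat (N : ℕ) : (Umat N).val * Qmat N * (Umat N)⁻¹.val = Pmat N := by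
  have hinv : (Umat N)⁻¹.val
      = Matrix.diagonal fun j : Fin (N+1) => (Complex.I ^ (j : ℕ))⁻¹ := rfl
  ext j k
  rw [show (Umat N).val = Matrix.diagonal fun j : Fin (N+1) => Complex.I ^ (j : ℕ) from rfl,
    hinv, Matrix.mul_diagonal, Matrix.diagonal_mul]
  have hI : ∀ m : ℕ, Complex.I ^ m * (Complex.I ^ m)⁻¹ = 1 :=
    fun m => mul_inv_cancel₀ (pow_ne_zero _ Complex.I_ne_zero)
  simp only [Qmat, Pmat, Matrix.of_apply]
  by_cases h1 : (j : ℕ) = (k : ℕ) + 1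
  · have h2 : ¬ ((j : ℕ) + 1 = (k : ℕ)) := by omega
    rw [if_pos h1, if_neg h2, h1]
    have hkey : Complex.I ^ ((k:ℕ)+1) * (Complex.I ^ (k:ℕ))⁻¹ = Complex.I := by
      rw [pow_succ, mul_comm (Complex.I ^ (k:ℕ)) Complex.I, mul_assoc, hI, mul_one]
    rw [mul_right_comm, hkey]
    push_cast
    have hx : ¬ ((k:ℕ) + 1 + 1 = (k:ℕ)) := by omega
    rw [if_pos rfl, if_neg hx]
    ring
  · by_cases h2 : (j : ℕ) + 1 = (k : ℕ)
    · rw [if_neg h1, if_pos h2, ← h2]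
      have hkey : Complex.I ^ (j:ℕ) * (Complex.I ^ ((j:ℕ)+1))⁻¹ = -Complex.I := by
        rw [pow_succ, mul_inv, ← mul_assoc, hI, one_mul, Complex.inv_I]
      rw [mul_right_comm, hkey]
      push_cast
      have hx : ¬ ((j:ℕ) = (j:ℕ) + 1 + 1) := by omega
      rw [if_neg hx, if_pos rfl]
      ring
    · simp [h1, h2]

/-- the characteristic polynomials of `P_N` and `Q_N` coincide,
hence the two matrices have identical spectra. -/
theorem charpoly_Pmat_eq_charpoly_Qmat (N : ℕ) :
    (Pmat N).charpoly = (Qmat N).charpoly ∧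
    spectrum ℂ (Pmat N) = spectrum ℂ (Qmat N) := by
  constructor
  · rw [← conj_Qmat N]; exact _root_.charpoly_units_conj' (Umat N) (Qmat N)
  · rw [← conj_Qmat N]; exact spectrum.units_conjugate
end

section
/- For every natural number n, the probabilist's Hermite polynomial He_n, regarded as a polynomial over ℝ, has exactly n distinct real roots; that is, He_n splits over ℝ and its root multiset has n distinct elements, each of multiplicity one. -/
open Polynomial Filter

noncomputable def Hr (n : ℕ) : Polynomial ℝ := (Polynomial.hermite n).map (Int.castRingHom ℝ)

lemma Hr_monic (n : ℕ) : (Hr n).Monic := (hermite_monic n).map _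

lemma Hr_natDegree (n : ℕ) : (Hr n).natDegree = n := by
  rw [Hr, (hermite_monic n).natDegree_map, natDegree_hermite]

lemma Hr_succ (n : ℕ) : Hr (n + 1) = X * Hr n - derivative (Hr n) := by
  simp only [Hr, hermite_succ, Polynomial.map_sub, Polynomial.map_mul, Polynomial.map_X,
    derivative_map]

lemma Hr_deriv (n : ℕ) : derivative (Hr (n + 1)) = ((n : Polynomial ℝ) + 1) * Hr n := by
  induction n with
  | zero =>
    simp [Hr_succ, Hr, hermite_zero]
  | succ n ih =>
    rw [Hr_succ (n+1), derivative_sub, derivative_mul, derivative_X, one_mul, ih,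
      derivative_mul, Hr_succ n]
    push_cast
    ring_nf
    simp [derivative_natCast]

lemma sign_mul_neg {s x y : ℝ} (hs : s * s = 1) (hx : 0 < s * x) (hy : 0 < (-s) * y) :
    x * y < 0 := by nlinarith

lemma exists_root_Ioo (p : Polynomial ℝ) {a b : ℝ} (hab : a < b)
    (h : p.eval a * p.eval b < 0) : ∃ c, a < c ∧ c < b ∧ p.eval c = 0 := by
  have hc : ContinuousOn (fun x => p.eval x) (Set.Icc a b) := p.continuous.continuousOn
  rcases lt_trichotomy (p.eval a) 0 with hA | hA | hA
  · have hB : 0 < p.eval b := by nlinarith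
    obtain ⟨c, hc1, hc2⟩ := intermediate_value_Ioo (le_of_lt hab) hc
      (show (0:ℝ) ∈ Set.Ioo (p.eval a) (p.eval b) from ⟨hA, hB⟩)
    exact ⟨c, hc1.1, hc1.2, hc2⟩
  · simp [hA] at h
  · have hB : p.eval b < 0 := by nlinarith
    obtain ⟨c, hc1, hc2⟩ := intermediate_value_Ioo' (le_of_lt hab) hc
      (show (0:ℝ) ∈ Set.Ioo (p.eval b) (p.eval a) from ⟨hB, hA⟩)
    exact ⟨c, hc1.1, hc1.2, hc2⟩

lemma exists_pos_side (p : Polynomial ℝ) (hd : p.natDegree ≠ 0) (hlc : 0 < p.leadingCoeff)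
    (b : ℝ) : ∃ c, b < c ∧ 0 < p.eval c := by
  have hdeg : 0 < p.degree := natDegree_pos_iff_degree_pos.mp (Nat.pos_of_ne_zero hd)
  have ht := p.tendsto_atTop_of_leadingCoeff_nonneg hdeg hlc.le
  obtain ⟨c, h1, h2⟩ := ((ht.eventually_gt_atTop 0).and (eventually_gt_atTop b)).exists
  exact ⟨c, h2, h1⟩

lemma exists_neg_side (p : Polynomial ℝ) (hm : p.Monic) (hd : p.natDegree ≠ 0) (b : ℝ) :
    ∃ a, a < b ∧ 0 < (-1 : ℝ) ^ p.natDegree * p.eval a := by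
  set n := p.natDegree with hn
  set q : Polynomial ℝ := C ((-1 : ℝ) ^ n) * (p.comp (-X)) with hq
  have hXd : (-X : Polynomial ℝ).natDegree = 1 := by simp
  have hcompd : (p.comp (-X)).natDegree = n := by
    rw [natDegree_comp, hXd, mul_one]
  have hcomplc : (p.comp (-X)).leadingCoeff = (-1 : ℝ) ^ n := by
    rw [leadingCoeff_comp (by rw [hXd]; norm_num)]
    simp [hm.leadingCoeff, ← hn]
  have hne : ((-1 : ℝ) ^ n) ≠ 0 := pow_ne_zero n (by norm_num)
  have hqd : q.natDegree = n := by
    rw [hq, natDegree_C_mul hne, hcompd]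
  have hqlc : q.leadingCoeff = 1 := by
    rw [hq, leadingCoeff_mul, leadingCoeff_C, hcomplc, ← pow_add]
    exact Even.neg_one_pow ⟨n, rfl⟩
  obtain ⟨c, hc1, hc2⟩ := exists_pos_side q (hqd ▸ hd) (by rw [hqlc]; norm_num) (-b)
  refine ⟨-c, by linarith, ?_⟩
  have hev : q.eval c = (-1 : ℝ) ^ n * p.eval (-c) := by
    simp [hq, eval_comp]
  rw [← hev]
  exact hc2

/-- A monic polynomial of degree `n` with `n` distinct roots equals the product of the
corresponding linear factors, and its root multiset is exactly those roots. -/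
lemma roots_eq_of_inj {n : ℕ} (p : Polynomial ℝ) (hm : p.Monic) (hd : p.natDegree = n)
    (x : Fin n → ℝ) (hinj : Function.Injective x) (h0 : ∀ i, p.eval (x i) = 0) :
    p.roots = Multiset.map x Finset.univ.val ∧ p = ∏ i, (X - C (x i)) := by
  set s : Multiset ℝ := Multiset.map x Finset.univ.val with hs
  have hnd : s.Nodup := Multiset.Nodup.map hinj Finset.univ.nodup
  have hp0 : p ≠ 0 := hm.ne_zero
  have hsub : s ≤ p.roots := by
    rw [Multiset.le_iff_subset hnd]
    intro a ha
    rw [hs, Multiset.mem_map] at ha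
    obtain ⟨i, _, rfl⟩ := ha
    rw [mem_roots hp0]
    exact h0 i
  have hcard : s.card = n := by simp [hs]
  have hroots : p.roots = s := by
    refine (Multiset.eq_of_le_of_card_le hsub ?_).symm
    rw [hcard]
    exact hd ▸ p.card_roots'
  have hsplits : p.Splits := by
    rw [splits_iff_card_roots, hroots, hcard, hd]
  refine ⟨hroots, ?_⟩
  have := hsplits.eq_prod_roots_of_monic hm
  rw [hroots, hs, Multiset.map_map] at this
  rw [this, Finset.prod_eq_multiset_prod]
  rfl

/-- Sign of a product: if the first `k` factors are positive and the rest negative,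
the product has sign `(-1)^(m-k)`. -/
lemma prod_sign (m : ℕ) (f : Fin m → ℝ) (k : ℕ) (hk : k ≤ m)
    (hpos : ∀ i : Fin m, (i : ℕ) < k → 0 < f i)
    (hneg : ∀ i : Fin m, k ≤ (i : ℕ) → f i < 0) :
    0 < (-1 : ℝ) ^ (m - k) * ∏ i, f i := by
  induction m with
  | zero => simp
  | succ m ih =>
    rw [Fin.prod_univ_castSucc]
    rcases Nat.lt_or_ge m k with h | h
    · -- k = m + 1, all positive
      have hkm : k = m + 1 := le_antisymm hk h
      subst hkm
      have : ∀ i : Fin (m+1), 0 < f i := fun i => hpos i i.isLt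
      simp only [Nat.sub_self, pow_zero, one_mul]
      exact mul_pos (Finset.prod_pos fun i _ => this _) (this _)
    · -- last factor negative
      have hlast : f (Fin.last m) < 0 := hneg _ (by simp [h])
      have hIH := ih (fun i => f i.castSucc) h
        (fun i hi => hpos _ (by simpa using hi))
        (fun i hi => hneg _ (by simpa using hi))
      have hms : m + 1 - k = (m - k) + 1 := by omega
      rw [hms, pow_succ]
      have : (-1:ℝ) ^ (m - k) * -1 * ((∏ i : Fin m, f i.castSucc) * f (Fin.last m))
          = ((-1:ℝ) ^ (m - k) * ∏ i : Fin m, f i.castSucc) * (-(f (Fin.last m))) := by ring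
      rw [this]
      exact mul_pos hIH (by linarith)

/-- Main induction: `Hr n` has `n` distinct real roots, at which `Hr (n+1)` has
alternating signs (the sign at the `i`-th root being `(-1)^(n-i)`). -/
lemma key (n : ℕ) : ∃ x : Fin n → ℝ, StrictMono x ∧ (∀ i, (Hr n).eval (x i) = 0) ∧
    (∀ i : Fin n, 0 < (-1 : ℝ) ^ (n - (i : ℕ)) * (Hr (n + 1)).eval (x i)) := by
  induction n with
  | zero => exact ⟨Fin.elim0, fun i => i.elim0, fun i => i.elim0, fun i => i.elim0⟩
  | succ n IH =>
    obtain ⟨x, hmono, hroot, hsign⟩ := IH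
    -- product form of Hr n
    obtain ⟨-, hprod⟩ := roots_eq_of_inj (Hr n) (Hr_monic n) (Hr_natDegree n) x
      hmono.injective hroot
    have hevalprod : ∀ z : ℝ, (Hr n).eval z = ∏ i, (z - x i) := by
      intro z
      rw [hprod, eval_prod]
      simp
    -- pick c to the right
    obtain ⟨M, hM⟩ : ∃ M : ℝ, ∀ i, x i ≤ M := by
      rcases Nat.eq_zero_or_pos n with h | h
      · subst h; exact ⟨0, fun i => i.elim0⟩
      · refine ⟨x ⟨n - 1, by omega⟩, fun i => hmono.monotone ?_⟩
        have hi := i.isLt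
        exact Fin.le_def.mpr (show (i : ℕ) ≤ n - 1 by omega)
    obtain ⟨c, hc1, hc2⟩ := exists_pos_side (Hr (n+1))
      (by rw [Hr_natDegree]; omega) (by rw [(Hr_monic (n+1)).leadingCoeff]; norm_num) M
    have hxc : ∀ i, x i < c := fun i => lt_of_le_of_lt (hM i) hc1
    -- pick a to the left
    obtain ⟨m, hm⟩ : ∃ m : ℝ, ∀ i, m ≤ x i := by
      rcases Nat.eq_zero_or_pos n with h | h
      · subst h; exact ⟨0, fun i => i.elim0⟩
      · refine ⟨x ⟨0, h⟩, fun i => hmono.monotone ?_⟩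
        exact Fin.le_def.mpr (Nat.zero_le _)
    obtain ⟨a, ha1, ha2⟩ := exists_neg_side (Hr (n+1)) (Hr_monic (n+1))
      (by rw [Hr_natDegree]; omega) (min c m)
    have hax : ∀ i, a < x i := fun i => lt_of_lt_of_le ha1 (le_trans (min_le_right c m) (hm i))
    have hac : a < c := lt_of_lt_of_le ha1 (min_le_left c m)
    rw [Hr_natDegree] at ha2
    -- the grid
    set g : ℕ → ℝ := fun k => if h : k = 0 then a else
      (if h2 : k - 1 < n then x ⟨k - 1, h2⟩ else c) with hg
    have hg0 : g 0 = a := by simp [hg]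
    have hgx : ∀ (i : Fin n), g (i + 1) = x i := by
      intro i; simp [hg]
    have hglast : g (n + 1) = c := by simp [hg]
    have gmono : ∀ j k : ℕ, j < k → k ≤ n + 1 → g j < g k := by
      intro j k hjk hkn
      rcases Nat.eq_zero_or_pos j with hj | hj
      · subst hj
        rw [hg0]
        rcases Nat.lt_or_ge (k - 1) n with h2 | h2
        · have hgk : g k = x ⟨k - 1, h2⟩ := by
            have := hgx ⟨k - 1, h2⟩
            simpa [show (k - 1) + 1 = k by omega] using this
          rw [hgk]; exact hax _
        · have hk : k = n + 1 := by omega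
          subst hk; rw [hglast]; exact hac
      · have hj1 : j - 1 < n := by omega
        have : g j = x ⟨j - 1, hj1⟩ := by
          have := hgx ⟨j - 1, hj1⟩
          simpa [show (j - 1) + 1 = j by omega] using this
        rw [this]
        rcases Nat.lt_or_ge (k - 1) n with h2 | h2
        · have : g k = x ⟨k - 1, h2⟩ := by
            have := hgx ⟨k - 1, h2⟩
            simpa [show (k - 1) + 1 = k by omega] using this
          rw [this]
          exact hmono (Fin.lt_def.mpr (by simp; omega))
        · have hk : k = n + 1 := by omega
          subst hk; rw [hglast]; exact hxc _
    -- signs on the grid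
    have hgsign : ∀ k : ℕ, k ≤ n + 1 → 0 < (-1:ℝ) ^ (n + 1 - k) * (Hr (n+1)).eval (g k) := by
      intro k hk
      rcases Nat.eq_zero_or_pos k with h | h
      · subst h; rw [hg0]; simpa using ha2
      · rcases Nat.lt_or_ge (k - 1) n with h2 | h2
        · have : g k = x ⟨k - 1, h2⟩ := by
            have := hgx ⟨k - 1, h2⟩
            simpa [show (k - 1) + 1 = k by omega] using this
          rw [this]
          have := hsign ⟨k - 1, h2⟩
          simpa [show n - (k - 1) = n + 1 - k by omega] using this
        · have hk1 : k = n + 1 := by omega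
          subst hk1; rw [hglast]
          simpa using hc2
    -- roots of Hr (n+1) in each gap
    have hex : ∀ j : Fin (n + 1), ∃ z, g j < z ∧ z < g (j + 1) ∧ (Hr (n+1)).eval z = 0 := by
      intro j
      have hj : (j : ℕ) ≤ n := by omega
      have s1 := hgsign j (by omega)
      have s2 := hgsign (j + 1) (by omega)
      have hmul : (Hr (n+1)).eval (g j) * (Hr (n+1)).eval (g (j+1)) < 0 := by
        have hss : ((-1:ℝ) ^ (n - (j:ℕ))) * ((-1:ℝ) ^ (n - (j:ℕ))) = 1 := by
          rw [← pow_add]; exact Even.neg_one_pow ⟨_, rfl⟩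
        have s2' : 0 < ((-1:ℝ) ^ (n - (j:ℕ))) * (Hr (n+1)).eval (g (j+1)) := by
          simpa [show n + 1 - ((j:ℕ)+1) = n - (j:ℕ) by omega] using s2
        have s1' : 0 < (-((-1:ℝ) ^ (n - (j:ℕ)))) * (Hr (n+1)).eval (g j) := by
          have : n + 1 - (j:ℕ) = (n - (j:ℕ)) + 1 := by omega
          rw [this, pow_succ] at s1
          nlinarith [s1]
        have := sign_mul_neg hss s2' s1'
        nlinarith [this]
      exact exists_root_Ioo _ (gmono j (j+1) (by omega) (by omega)) hmul
    choose y hy1 hy2 hy3 using hex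
    -- interlacing facts
    have hyx : ∀ (j : Fin (n+1)) (i : Fin n), (i : ℕ) < (j : ℕ) → x i < y j := by
      intro j i hij
      have h1 : g (i + 1) ≤ g j := by
        rcases eq_or_lt_of_le (show (i:ℕ) + 1 ≤ (j:ℕ) by omega) with h | h
        · rw [h]
        · exact le_of_lt (gmono _ _ h (by omega))
      calc x i = g (i + 1) := (hgx i).symm
        _ ≤ g j := h1
        _ < y j := hy1 j
    have hxy : ∀ (j : Fin (n+1)) (i : Fin n), (j : ℕ) ≤ (i : ℕ) → y j < x i := by
      intro j i hij
      have h1 : g ((j:ℕ) + 1) ≤ g (i + 1) := by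
        rcases eq_or_lt_of_le (show (j:ℕ) + 1 ≤ (i:ℕ) + 1 by omega) with h | h
        · rw [h]
        · exact le_of_lt (gmono _ _ h (by omega))
      calc y j < g ((j:ℕ) + 1) := hy2 j
        _ ≤ g (i + 1) := h1
        _ = x i := hgx i
    refine ⟨y, ?_, hy3, ?_⟩
    · intro j j' hjj'
      have hjn : (j : ℕ) < n := by omega
      have h1 : y j < x ⟨j, hjn⟩ := hxy j ⟨j, hjn⟩ (by simp)
      have h2 : x ⟨j, hjn⟩ < y j' := hyx j' ⟨j, hjn⟩ (by simp; omega)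
      linarith
    · intro j
      -- eval of Hr (n+2) at y j
      have hev : (Hr (n+2)).eval (y j) = -(((n:ℝ) + 1) * (Hr n).eval (y j)) := by
        rw [Hr_succ (n+1), eval_sub, eval_mul, eval_X, hy3 j, mul_zero, Hr_deriv n]
        simp
      have hprodsign : 0 < (-1:ℝ) ^ (n - (j:ℕ)) * ∏ i, (y j - x i) := by
        refine prod_sign n (fun i => y j - x i) j (by omega) ?_ ?_
        · intro i hi
          exact sub_pos.mpr (hyx j i hi)
        · intro i hi
          exact sub_neg.mpr (hxy j i hi)
      rw [hev, hevalprod]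
      have hstep : n + 1 - (j:ℕ) = (n - (j:ℕ)) + 1 := by omega
      rw [hstep, pow_succ]
      nlinarith [hprodsign, (show (0:ℝ) < (n:ℝ) + 1 by positivity)]

/-- the probabilist's Hermite polynomial `He_n`, viewed over `ℝ`, has exactly
`n` distinct real roots: it splits over `ℝ`, its root multiset has cardinality `n`, and the
roots are pairwise distinct (each of multiplicity one). -/
theorem hermite_n_distinct_real_roots (n : ℕ) :
    (((Polynomial.hermite n).map (Int.castRingHom ℝ)).Splits) ∧
    ((Polynomial.hermite n).map (Int.castRingHom ℝ)).roots.card = n ∧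
    ((Polynomial.hermite n).map (Int.castRingHom ℝ)).roots.Nodup := by
  obtain ⟨x, hmono, hroot, -⟩ := key n
  obtain ⟨hroots, -⟩ := roots_eq_of_inj (Hr n) (Hr_monic n) (Hr_natDegree n) x
    hmono.injective hroot
  have hcard : (Hr n).roots.card = n := by rw [hroots]; simp
  refine ⟨?_, hcard, ?_⟩
  · rw [show ((Polynomial.hermite n).map (Int.castRingHom ℝ)) = Hr n from rfl,
      splits_iff_card_roots, hcard, Hr_natDegree]
  · rw [show ((Polynomial.hermite n).map (Int.castRingHom ℝ)) = Hr n from rfl, hroots]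
    exact Multiset.Nodup.map hmono.injective Finset.univ.nodup
end

section
/- For every natural number N and every real number λ such that He_{N+1}(√2·λ) = 0, the vector v ∈ ℂ^{N+1} with components v_k = He_k(√2·λ)/√(k!) for k = 0, …, N is an eigenvector of the position matrix Q_N with eigenvalue λ; that is, Q_N · v = λ·v and v ≠ 0. -/
open Matrix Polynomial

lemma herm_deriv (n : ℕ) : derivative (hermite (n+1)) = (n+1 : ℕ) • hermite n := by
  induction n with
  | zero => simp [hermite_succ]
  | succ m ih =>
    rw [hermite_succ (m+1)]
    rw [derivative_sub, derivative_mul, derivative_X, ih]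
    simp only [derivative_smul, ih]
    rw [hermite_succ m]
    ring_nf

noncomputable def Hx (x : ℝ) (n : ℕ) : ℝ :=
  ((hermite n).map (Int.castRingHom ℝ)).eval x

lemma Hx_zero (x : ℝ) : Hx x 0 = 1 := by simp [Hx]

lemma Hx_one (x : ℝ) : Hx x 1 = x := by simp [Hx, hermite_one]

lemma Hx_rec (x : ℝ) (n : ℕ) : Hx x (n+2) = x * Hx x (n+1) - (n+1 : ℝ) * Hx x n := by
  unfold Hx
  rw [hermite_succ (n+1), herm_deriv]
  push_cast [Polynomial.map_sub, Polynomial.map_mul, Polynomial.map_smul]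
  simp [mul_comm]

noncomputable def wv (x : ℝ) (n : ℕ) : ℝ := Hx x n / Real.sqrt (Nat.factorial n)

lemma sqrt_fact_succ (n : ℕ) :
    Real.sqrt (Nat.factorial (n+1)) = Real.sqrt ((n:ℝ)+1) * Real.sqrt (Nat.factorial n) := by
  rw [← Real.sqrt_mul (by positivity)]
  norm_num [Nat.factorial_succ]

lemma wv_key (x : ℝ) (j : ℕ) :
    Real.sqrt j * wv x (j-1) + Real.sqrt ((j:ℝ)+1) * wv x (j+1) = x * wv x j := by
  cases j with
  | zero =>
    simp [wv, Hx_zero, Hx_one, sqrt_fact_succ]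
  | succ m =>
    have hfm : Real.sqrt (Nat.factorial m) ≠ 0 := by positivity
    have hm1 : Real.sqrt ((m:ℝ)+1) ≠ 0 := by positivity
    have hm2 : Real.sqrt ((m:ℝ)+1+1) ≠ 0 := by positivity
    have hs : Real.sqrt ((m:ℝ)+1) * Real.sqrt ((m:ℝ)+1) = (m:ℝ)+1 :=
      Real.mul_self_sqrt (by positivity)
    simp only [Nat.add_sub_cancel, wv, Hx_rec]
    rw [sqrt_fact_succ (m+1), sqrt_fact_succ m]
    push_cast
    field_simp
    linear_combination Hx x m * hs


lemma sumA' (g : ℕ → ℝ) (n j : ℕ) (hj : j ≤ n) :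
    ∑ k ∈ Finset.range (n+1), (if j = k+1 then Real.sqrt (k+1) * g k else 0) =
      Real.sqrt j * g (j-1) := by
  cases j with
  | zero =>
    rw [Finset.sum_eq_zero (fun k _ => by simp)]
    simp
  | succ m =>
    rw [Finset.sum_eq_single m]
    · simp
    · intro b _ hb
      rw [if_neg (by omega)]
    · intro h
      exact absurd (Finset.mem_range.mpr (by omega)) h

lemma sumB' (g : ℕ → ℝ) (n j : ℕ) (hj : j ≤ n) (hg : g (n+1) = 0) :
    ∑ k ∈ Finset.range (n+1), (if j+1 = k then Real.sqrt k * g k else 0) =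
      Real.sqrt (j+1) * g (j+1) := by
  rcases lt_or_eq_of_le hj with h | h
  · rw [Finset.sum_eq_single (j+1)]
    · simp
    · intro b _ hb
      rw [if_neg (by omega)]
    · intro hmem
      exact absurd (Finset.mem_range.mpr (by omega)) hmem
  · subst h
    rw [Finset.sum_eq_zero, hg, mul_zero]
    intro k hk
    have := Finset.mem_range.mp hk
    rw [if_neg (by omega)]

lemma finsum_key (x : ℝ) (n : ℕ) (hw : wv x (n+1) = 0) (j : Fin (n+1)) :
    ∑ k : Fin (n+1),
      (1 / Real.sqrt 2) *
        (Real.sqrt (((k:ℕ):ℝ) + 1) * (if (j : ℕ) = (k : ℕ) + 1 then 1 else 0) +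
         Real.sqrt ((k:ℕ):ℝ) * (if (j : ℕ) + 1 = (k : ℕ) then 1 else 0)) * wv x (k : ℕ)
      = x / Real.sqrt 2 * wv x (j : ℕ) := by
  have step : ∀ k : ℕ,
      (1 / Real.sqrt 2) *
        (Real.sqrt ((k:ℝ) + 1) * (if (j : ℕ) = k + 1 then 1 else 0) +
         Real.sqrt (k:ℝ) * (if (j : ℕ) + 1 = k then 1 else 0)) * wv x k =
      (1 / Real.sqrt 2) *
        ((if (j : ℕ) = k + 1 then Real.sqrt ((k:ℕ)+1) * wv x k else 0) +
         (if (j : ℕ) + 1 = k then Real.sqrt ((k:ℕ)) * wv x k else 0)) := by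
    intro k
    split_ifs <;> ring
  calc ∑ k : Fin (n+1),
      (1 / Real.sqrt 2) *
        (Real.sqrt (((k:ℕ):ℝ) + 1) * (if (j : ℕ) = (k : ℕ) + 1 then 1 else 0) +
         Real.sqrt ((k:ℕ):ℝ) * (if (j : ℕ) + 1 = (k : ℕ) then 1 else 0)) * wv x (k : ℕ)
      = ∑ k ∈ Finset.range (n+1),
      (1 / Real.sqrt 2) *
        (Real.sqrt ((k:ℝ) + 1) * (if (j : ℕ) = k + 1 then 1 else 0) +
         Real.sqrt (k:ℝ) * (if (j : ℕ) + 1 = k then 1 else 0)) * wv x k := by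
        rw [← Fin.sum_univ_eq_sum_range]
    _ = ∑ k ∈ Finset.range (n+1),
      (1 / Real.sqrt 2) *
        ((if (j : ℕ) = k + 1 then Real.sqrt ((k:ℕ)+1) * wv x k else 0) +
         (if (j : ℕ) + 1 = k then Real.sqrt ((k:ℕ)) * wv x k else 0)) :=
        Finset.sum_congr rfl (fun k _ => step k)
    _ = (1 / Real.sqrt 2) *
        (∑ k ∈ Finset.range (n+1), (if (j : ℕ) = k + 1 then Real.sqrt ((k:ℕ)+1) * wv x k else 0) +
         ∑ k ∈ Finset.range (n+1), (if (j : ℕ) + 1 = k then Real.sqrt ((k:ℕ)) * wv x k else 0)) := by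
        rw [← Finset.sum_add_distrib, Finset.mul_sum]
    _ = x / Real.sqrt 2 * wv x (j : ℕ) := by
        rw [sumA' (wv x) n (j : ℕ) (by omega), sumB' (wv x) n (j : ℕ) (by omega) hw]
        have h := wv_key x (j : ℕ)
        push_cast at h ⊢
        rw [h]
        ring

/-- for every real `λ` with `He_{N+1}(√2·λ) = 0`, the vector with components
`v_k = He_k(√2·λ)/√(k!)` is an eigenvector of `Q_N` with eigenvalue `λ`. -/
theorem hermite_eigenvector_of_Qmat (N : ℕ) (lam : ℝ)
    (hroot : ((Polynomial.hermite (N + 1)).map (Int.castRingHom ℝ)).eval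
      (Real.sqrt 2 * lam) = 0) :
    (Qmat N).mulVec
        (fun k : Fin (N+1) =>
          ((((Polynomial.hermite (k : ℕ)).map (Int.castRingHom ℝ)).eval (Real.sqrt 2 * lam) /
            Real.sqrt (Nat.factorial (k : ℕ)) : ℝ) : ℂ)) =
      (lam : ℂ) • (fun k : Fin (N+1) =>
          ((((Polynomial.hermite (k : ℕ)).map (Int.castRingHom ℝ)).eval (Real.sqrt 2 * lam) /
            Real.sqrt (Nat.factorial (k : ℕ)) : ℝ) : ℂ)) ∧
    (fun k : Fin (N+1) =>
        ((((Polynomial.hermite (k : ℕ)).map (Int.castRingHom ℝ)).eval (Real.sqrt 2 * lam) /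
          Real.sqrt (Nat.factorial (k : ℕ)) : ℝ) : ℂ)) ≠ 0 := by
  set x := Real.sqrt 2 * lam with hx
  have hwv : ∀ k : ℕ, ((Polynomial.hermite k).map (Int.castRingHom ℝ)).eval x /
      Real.sqrt (Nat.factorial k) = wv x k := fun k => rfl
  have hwN : wv x (N+1) = 0 := by
    unfold wv Hx
    rw [hroot, zero_div]
  have hs2 : Real.sqrt 2 ≠ 0 := by positivity
  constructor
  · funext j
    show ∑ k : Fin (N+1), Qmat N j k * ((wv x (k : ℕ) : ℝ) : ℂ) = _
    have entry : ∀ k : Fin (N+1), Qmat N j k * ((wv x (k : ℕ) : ℝ) : ℂ) =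
        ((((1 / Real.sqrt 2) *
          (Real.sqrt (((k:ℕ):ℝ) + 1) * (if (j : ℕ) = (k : ℕ) + 1 then 1 else 0) +
           Real.sqrt ((k:ℕ):ℝ) * (if (j : ℕ) + 1 = (k : ℕ) then 1 else 0)) * wv x (k : ℕ) : ℝ)) : ℂ) := by
      intro k
      simp [Qmat]
    rw [Finset.sum_congr rfl (fun k _ => entry k), ← Complex.ofReal_sum]
    have : (∑ k : Fin (N+1),
        (1 / Real.sqrt 2) *
          (Real.sqrt (((k:ℕ):ℝ) + 1) * (if (j : ℕ) = (k : ℕ) + 1 then 1 else 0) +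
           Real.sqrt ((k:ℕ):ℝ) * (if (j : ℕ) + 1 = (k : ℕ) then 1 else 0)) * wv x (k : ℕ)) =
        lam * wv x (j : ℕ) := by
      rw [finsum_key x N hwN j, hx]
      field_simp
    rw [this]
    simp [hwv]
  · intro hv
    have h0 := congrFun hv ⟨0, Nat.succ_pos N⟩
    rw [hwv 0] at h0
    simp [wv, Hx_zero] at h0
end

section
/- For every natural number N, every eigenvector of the position matrix Q_N has last component of fixed relative size: if v ∈ ℂ^{N+1} is nonzero and Q_N · v = λ·v for some λ ∈ ℂ, then (N+1)·|v_N|² = Σ_{k=0}^{N} |v_k|². In particular every normalized eigenvector of Q_N has last component of modulus 1/√(N+1). -/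
open Matrix Polynomial

/-- Extension of a vector on `Fin (N+1)` to `ℕ` by zero. -/
noncomputable def Vext (N : ℕ) (v : Fin (N+1) → ℂ) : ℕ → ℂ :=
  fun n => if h : n < N + 1 then v ⟨n, h⟩ else 0

lemma Vext_apply (N : ℕ) (v : Fin (N+1) → ℂ) (n : ℕ) (h : n < N+1) :
    Vext N v n = v ⟨n, h⟩ := dif_pos h

lemma Vext_coe (N : ℕ) (v : Fin (N+1) → ℂ) (k : Fin (N+1)) :
    v k = Vext N v k := by
  rw [Vext_apply N v k k.isLt]

lemma Vext_zero (N : ℕ) (v : Fin (N+1) → ℂ) (n : ℕ) (h : ¬ n < N+1) :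
    Vext N v n = 0 := dif_neg h

lemma Q_mulVec_apply (N : ℕ) (v : Fin (N+1) → ℂ) (j : Fin (N+1)) :
    (Qmat N).mulVec v j = (1 / (Real.sqrt 2 : ℂ)) *
      ((Real.sqrt (j:ℕ) : ℂ) * Vext N v ((j:ℕ) - 1) +
       (Real.sqrt ((j:ℕ)+1) : ℂ) * Vext N v ((j:ℕ)+1)) := by
  have expand : ∀ k : Fin (N+1), Qmat N j k * v k =
      (1 / (Real.sqrt 2 : ℂ)) *
        ((if (j:ℕ) = (k:ℕ)+1 then (Real.sqrt ((k:ℕ)+1) : ℂ) * v k else 0) +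
         (if (j:ℕ)+1 = (k:ℕ) then (Real.sqrt (k:ℕ) : ℂ) * v k else 0)) := by
    intro k
    simp only [Qmat, Matrix.of_apply]
    split_ifs <;> push_cast <;> ring
  have S1 : (∑ k : Fin (N+1), if (j:ℕ) = (k:ℕ)+1 then (Real.sqrt ((k:ℕ)+1) : ℂ) * v k else 0)
      = (Real.sqrt (j:ℕ) : ℂ) * Vext N v ((j:ℕ) - 1) := by
    by_cases hj0 : (j:ℕ) = 0
    · rw [hj0]
      simp
    · obtain ⟨m, hm⟩ := Nat.exists_eq_succ_of_ne_zero hj0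
      have hmlt : m < N + 1 := by have := j.isLt; omega
      rw [hm]
      rw [Finset.sum_eq_single (⟨m, hmlt⟩ : Fin (N+1))]
      · simp [Vext_apply N v m hmlt]
      · intro b _ hb
        rw [if_neg]
        intro hcon
        exact hb (by apply Fin.ext; simp only [Fin.val_mk]; omega)
      · intro h; exact absurd (Finset.mem_univ _) h
  have S2 : (∑ k : Fin (N+1), if (j:ℕ)+1 = (k:ℕ) then (Real.sqrt (k:ℕ) : ℂ) * v k else 0)
      = (Real.sqrt ((j:ℕ)+1) : ℂ) * Vext N v ((j:ℕ)+1) := by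
    by_cases hj : (j:ℕ)+1 < N+1
    · rw [Finset.sum_eq_single (⟨(j:ℕ)+1, hj⟩ : Fin (N+1))]
      · simp [Vext_apply N v _ hj]
      · intro b _ hb
        rw [if_neg]
        intro hcon
        exact hb (by apply Fin.ext; simp only [Fin.val_mk]; omega)
      · intro h; exact absurd (Finset.mem_univ _) h
    · rw [Vext_zero N v _ hj, mul_zero]
      apply Finset.sum_eq_zero
      intro k _
      rw [if_neg]
      intro hcon
      exact hj (hcon ▸ k.isLt)
  unfold Matrix.mulVec dotProduct
  rw [Finset.sum_congr rfl (fun k _ => expand k), ← Finset.mul_sum,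
    Finset.sum_add_distrib, S1, S2]

lemma Q_recur (N : ℕ) (v : Fin (N+1) → ℂ) (lam : ℂ)
    (heig : (Qmat N).mulVec v = lam • v) (m : ℕ) (hm : m < N + 1) :
    (Real.sqrt m : ℂ) * Vext N v (m-1) + (Real.sqrt (m+1) : ℂ) * Vext N v (m+1)
      = Real.sqrt 2 * lam * Vext N v m := by
  have h := congrFun heig ⟨m, hm⟩
  rw [Q_mulVec_apply] at h
  simp only [Pi.smul_apply, smul_eq_mul] at h
  rw [← Vext_apply N v m hm] at h
  have h2 : (Real.sqrt 2 : ℂ) ≠ 0 := by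
    simp only [ne_eq, Complex.ofReal_eq_zero]
    positivity
  field_simp at h
  linear_combination h

/-- every eigenvector of `Q_N` has last component of fixed relative size:
`(N+1)·|v_N|² = Σ_k |v_k|²`. -/
theorem eigenvector_last_component (N : ℕ) (v : Fin (N+1) → ℂ) (lam : ℂ)
    (hv : v ≠ 0) (heig : (Qmat N).mulVec v = lam • v) :
    ((N : ℝ) + 1) * ‖v (Fin.last N)‖ ^ 2 =
      ∑ k : Fin (N+1), ‖v k‖ ^ 2 := by
  classical
  set V : ℕ → ℂ := Vext N v with hV
  set s : Finset ℕ := Finset.range (N+1) with hs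
  have hrec : ∀ m ∈ s, (Real.sqrt m : ℂ) * V (m-1) + (Real.sqrt (m+1) : ℂ) * V (m+1)
      = Real.sqrt 2 * lam * V m := fun m hm =>
    Q_recur N v lam heig m (Finset.mem_range.mp hm)
  set a : ℕ → ℂ := fun m => (Real.sqrt m : ℂ) * V (m-1) with ha
  set b : ℕ → ℂ := fun m => (Real.sqrt (m+1) : ℂ) * V (m+1) with hb
  have hab : ∀ m ∈ s, a m + b m = Real.sqrt 2 * lam * V m := hrec
  have hVtop : V (N+1) = 0 := Vext_zero N v _ (by omega)
  have ha0 : a 0 = 0 := by simp [ha]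
  set S : ℂ := ∑ m ∈ s, (Real.sqrt (m+1) : ℂ) * (starRingEnd ℂ) (V m) * V (m+1) with hS
  have hS' : S = ∑ i ∈ Finset.range N,
      (Real.sqrt (i+1) : ℂ) * (starRingEnd ℂ) (V i) * V (i+1) := by
    rw [hS, hs, Finset.sum_range_succ, hVtop, mul_zero, add_zero]
  -- ∑ conj(a m) * V m = S
  have haV : ∑ m ∈ s, (starRingEnd ℂ) (a m) * V m = S := by
    rw [hs, Finset.sum_range_succ' (fun m => (starRingEnd ℂ) (a m) * V m) N, ha0, hS']
    simp only [map_zero, zero_mul, add_zero]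
    refine Finset.sum_congr rfl (fun i _ => ?_)
    simp only [ha, Nat.add_sub_cancel, _root_.map_mul, Complex.conj_ofReal,
      Nat.cast_add, Nat.cast_one]
    try ring
  -- ∑ conj(b m) * V m = conj S
  have hbV : ∑ m ∈ s, (starRingEnd ℂ) (b m) * V m = (starRingEnd ℂ) S := by
    rw [hS, map_sum]
    refine Finset.sum_congr rfl (fun m _ => ?_)
    simp only [hb, _root_.map_mul, Complex.conj_ofReal, Complex.conj_conj]
    try ring
  -- ∑ conj(V m) * a m = conj S
  have hVa : ∑ m ∈ s, (starRingEnd ℂ) (V m) * a m = (starRingEnd ℂ) S := by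
    have hcS : (starRingEnd ℂ) S = ∑ i ∈ Finset.range N,
        (Real.sqrt (i+1) : ℂ) * V i * (starRingEnd ℂ) (V (i+1)) := by
      rw [hS', map_sum]
      refine Finset.sum_congr rfl (fun i _ => ?_)
      simp only [_root_.map_mul, Complex.conj_ofReal, Complex.conj_conj]
      try ring
    rw [hs, Finset.sum_range_succ' (fun m => (starRingEnd ℂ) (V m) * a m) N, ha0,
      mul_zero, add_zero, hcS]
    refine Finset.sum_congr rfl (fun i _ => ?_)
    simp only [ha, Nat.add_sub_cancel, Nat.cast_add, Nat.cast_one]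
    try ring
  -- ∑ conj(V m) * b m = S
  have hVb : ∑ m ∈ s, (starRingEnd ℂ) (V m) * b m = S := by
    rw [hS]
    refine Finset.sum_congr rfl (fun m _ => ?_)
    simp only [hb]
    ring
  set T : ℂ := ∑ m ∈ s, (starRingEnd ℂ) (a m) * b m with hT
  have hba : ∑ m ∈ s, (starRingEnd ℂ) (b m) * a m = (starRingEnd ℂ) T := by
    rw [hT, map_sum]
    refine Finset.sum_congr rfl (fun m _ => ?_)
    simp only [_root_.map_mul, Complex.conj_conj]
    ring
  -- lam is real
  have hSig : ∑ m ∈ s, (starRingEnd ℂ) (V m) * V m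
      = ((∑ m ∈ s, Complex.normSq (V m) : ℝ) : ℂ) := by
    push_cast
    refine Finset.sum_congr rfl (fun m _ => ?_)
    rw [mul_comm, Complex.mul_conj]
  have hSigpos : (0:ℝ) < ∑ m ∈ s, Complex.normSq (V m) := by
    obtain ⟨j, hj⟩ := Function.ne_iff.mp hv
    refine Finset.sum_pos' (fun m _ => Complex.normSq_nonneg _) ⟨(j:ℕ), ?_, ?_⟩
    · rw [hs]; exact Finset.mem_range.mpr j.isLt
    · have : V (j:ℕ) = v j := (Vext_coe N v j).symm
      rw [this]
      exact Complex.normSq_pos.mpr hj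
  have hlam : (starRingEnd ℂ) lam = lam := by
    have hsum0 : ∑ m ∈ s, (starRingEnd ℂ) (V m) * (a m + b m)
        = Real.sqrt 2 * lam * ∑ m ∈ s, (starRingEnd ℂ) (V m) * V m := by
      rw [Finset.mul_sum]
      refine Finset.sum_congr rfl (fun m hm => ?_)
      rw [hab m hm]; ring
    have hsplit : ∑ m ∈ s, (starRingEnd ℂ) (V m) * (a m + b m)
        = (starRingEnd ℂ) S + S := by
      simp only [mul_add, Finset.sum_add_distrib, hVa, hVb]
    have key : (starRingEnd ℂ) S + S
        = Real.sqrt 2 * lam * ((∑ m ∈ s, Complex.normSq (V m) : ℝ) : ℂ) := by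
      rw [← hSig, ← hsum0, hsplit]
    have key2 := congrArg (starRingEnd ℂ) key
    simp only [map_add, _root_.map_mul, Complex.conj_conj, Complex.conj_ofReal] at key2
    have h3 : Real.sqrt 2 * lam * ((∑ m ∈ s, Complex.normSq (V m) : ℝ) : ℂ)
        = Real.sqrt 2 * (starRingEnd ℂ) lam * ((∑ m ∈ s, Complex.normSq (V m) : ℝ) : ℂ) := by
      linear_combination key2 - key
    have h2 : (Real.sqrt 2 : ℂ) ≠ 0 := by
      simp only [ne_eq, Complex.ofReal_eq_zero]; positivity
    have hSigne : ((∑ m ∈ s, Complex.normSq (V m) : ℝ) : ℂ) ≠ 0 := by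
      simp only [ne_eq, Complex.ofReal_eq_zero]
      exact ne_of_gt hSigpos
    exact (mul_left_cancel₀ h2 (mul_right_cancel₀ hSigne h3)).symm
  -- A = √2 lam S − T,  B = √2 lam conj S − conj T,  conj A = A ⇒ A = B
  have hA1 : ∑ m ∈ s, (starRingEnd ℂ) (a m) * a m = Real.sqrt 2 * lam * S - T := by
    have := fun m (hm : m ∈ s) => hab m hm
    have step : ∀ m ∈ s, (starRingEnd ℂ) (a m) * a m
        = Real.sqrt 2 * lam * ((starRingEnd ℂ) (a m) * V m) - (starRingEnd ℂ) (a m) * b m := by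
      intro m hm
      linear_combination (starRingEnd ℂ) (a m) * (hab m hm)
    rw [Finset.sum_congr rfl step, Finset.sum_sub_distrib, ← Finset.mul_sum, haV, hT]
  have hB1 : ∑ m ∈ s, (starRingEnd ℂ) (b m) * b m
      = Real.sqrt 2 * lam * (starRingEnd ℂ) S - (starRingEnd ℂ) T := by
    have step : ∀ m ∈ s, (starRingEnd ℂ) (b m) * b m
        = Real.sqrt 2 * lam * ((starRingEnd ℂ) (b m) * V m) - (starRingEnd ℂ) (b m) * a m := by
      intro m hm
      linear_combination (starRingEnd ℂ) (b m) * (hab m hm)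
    rw [Finset.sum_congr rfl step, Finset.sum_sub_distrib, ← Finset.mul_sum, hbV, hba]
  have hAconj : (starRingEnd ℂ) (∑ m ∈ s, (starRingEnd ℂ) (a m) * a m)
      = ∑ m ∈ s, (starRingEnd ℂ) (a m) * a m := by
    rw [map_sum]
    refine Finset.sum_congr rfl (fun m _ => ?_)
    rw [_root_.map_mul, Complex.conj_conj]
    ring
  have hAB : ∑ m ∈ s, (starRingEnd ℂ) (a m) * a m
      = ∑ m ∈ s, (starRingEnd ℂ) (b m) * b m := by
    rw [hB1, ← hAconj, hA1]
    rw [map_sub, _root_.map_mul, _root_.map_mul, Complex.conj_ofReal, hlam]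
  -- pass to real sums
  set x : ℕ → ℝ := fun m => Complex.normSq (V m) with hx
  have hAx : ∑ m ∈ s, (starRingEnd ℂ) (a m) * a m
      = ((∑ m ∈ s, (m:ℝ) * x (m-1) : ℝ) : ℂ) := by
    rw [Complex.ofReal_sum]
    refine Finset.sum_congr rfl (fun m _ => ?_)
    calc (starRingEnd ℂ) (a m) * a m
        = ((Real.sqrt m : ℂ) * (Real.sqrt m : ℂ)) * (V (m-1) * (starRingEnd ℂ) (V (m-1))) := by
          simp only [ha, _root_.map_mul, Complex.conj_ofReal]; ring
      _ = (((m:ℝ)) : ℂ) * ((Complex.normSq (V (m-1)) : ℝ) : ℂ) := by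
          rw [← Complex.ofReal_mul, Real.mul_self_sqrt (Nat.cast_nonneg m), Complex.mul_conj]
      _ = (((m:ℝ) * x (m-1) : ℝ) : ℂ) := by rw [hx]; push_cast; ring
  have hBx : ∑ m ∈ s, (starRingEnd ℂ) (b m) * b m
      = ((∑ m ∈ s, ((m:ℝ)+1) * x (m+1) : ℝ) : ℂ) := by
    rw [Complex.ofReal_sum]
    refine Finset.sum_congr rfl (fun m _ => ?_)
    calc (starRingEnd ℂ) (b m) * b m
        = ((Real.sqrt (m+1) : ℂ) * (Real.sqrt (m+1) : ℂ)) * (V (m+1) * (starRingEnd ℂ) (V (m+1))) := by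
          simp only [hb, _root_.map_mul, Complex.conj_ofReal]; ring
      _ = ((((m:ℝ)+1):ℝ) : ℂ) * ((Complex.normSq (V (m+1)) : ℝ) : ℂ) := by
          rw [← Complex.ofReal_mul,
            Real.mul_self_sqrt (by positivity : (0:ℝ) ≤ (m:ℝ)+1), Complex.mul_conj]
      _ = ((((m:ℝ)+1) * x (m+1) : ℝ) : ℂ) := by rw [hx]; push_cast; ring
  have hrealAB : ∑ m ∈ s, (m:ℝ) * x (m-1) = ∑ m ∈ s, ((m:ℝ)+1) * x (m+1) := by
    have := hAB
    rw [hAx, hBx] at this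
    exact_mod_cast this
  -- telescope
  have hxtop : x (N+1) = 0 := by simp [hx, hVtop]
  have hL : ∑ m ∈ s, (m:ℝ) * x (m-1) = ∑ i ∈ Finset.range N, ((i:ℝ)+1) * x i := by
    rw [hs, Finset.sum_range_succ' (fun m => (m:ℝ) * x (m-1)) N]
    simp only [Nat.cast_zero, zero_mul, add_zero, Nat.add_sub_cancel]
    exact Finset.sum_congr rfl (fun i _ => by push_cast; ring)
  have hR : ∑ m ∈ s, ((m:ℝ)+1) * x (m+1) = ∑ i ∈ Finset.range N, ((i:ℝ)+1) * x (i+1) := by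
    rw [hs, Finset.sum_range_succ, hxtop, mul_zero, add_zero]
  have hR2 : ∑ i ∈ Finset.range N, ((i:ℝ)+1) * x (i+1) = ∑ m ∈ s, (m:ℝ) * x m := by
    rw [hs, Finset.sum_range_succ' (fun m => (m:ℝ) * x m) N]
    simp only [Nat.cast_zero, zero_mul, add_zero]
    exact (Finset.sum_congr rfl (fun i _ => by push_cast; ring)).symm
  have hL2 : ∑ i ∈ Finset.range N, ((i:ℝ)+1) * x i
      = (∑ m ∈ s, ((m:ℝ)+1) * x m) - ((N:ℝ)+1) * x N := by
    rw [hs, Finset.sum_range_succ]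
    ring
  have hfinal : ∑ m ∈ s, x m = ((N:ℝ)+1) * x N := by
    have h1 : (∑ m ∈ s, ((m:ℝ)+1) * x m) - ((N:ℝ)+1) * x N = ∑ m ∈ s, (m:ℝ) * x m := by
      rw [← hL2, ← hR2, ← hR, ← hL, hrealAB]
    have h2 : ∑ m ∈ s, ((m:ℝ)+1) * x m
        = ∑ m ∈ s, (m:ℝ) * x m + ∑ m ∈ s, x m := by
      rw [← Finset.sum_add_distrib]
      exact Finset.sum_congr rfl (fun m _ => by ring)
    rw [h2] at h1
    linarith
  -- conclude
  have habs : ∀ k : Fin (N+1), ‖v k‖ ^ 2 = x (k:ℕ) := by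
    intro k
    rw [Complex.sq_norm, hx, Vext_coe N v k]
  rw [Finset.sum_congr rfl (fun k _ => habs k)]
  rw [Fin.sum_univ_eq_sum_range (fun n => x n) (N+1)]
  rw [habs (Fin.last N)]
  have : ((Fin.last N : Fin (N+1)) : ℕ) = N := rfl
  rw [this, ← hs, hfinal]
end

section
/- For every natural number N and every real number μ with He_{N+1}(μ) = 0, the following Hermite identity holds: Σ_{j=0}^{N} He_j(μ)²/j! = (N+1)·He_N(μ)²/N!. -/
open Polynomial

lemma derivative_hermite_succ (n : ℕ) :
    derivative (hermite (n + 1)) = ((n : ℤ[X]) + 1) * hermite n := by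
  induction n with
  | zero => simp [hermite_one, hermite_zero]
  | succ n ih =>
    rw [hermite_succ (n+1), derivative_sub, derivative_mul, derivative_X, ih, derivative_mul,
      hermite_succ n]
    push_cast
    ring_nf
    simp [derivative_natCast]

lemma hermite_eval_rec (mu : ℝ) (n : ℕ) :
    ((hermite (n + 2)).map (Int.castRingHom ℝ)).eval mu =
      mu * ((hermite (n + 1)).map (Int.castRingHom ℝ)).eval mu
      - ((n : ℝ) + 1) * ((hermite n).map (Int.castRingHom ℝ)).eval mu := by
  rw [hermite_succ (n+1), derivative_hermite_succ]
  simp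

lemma hermite_cd (mu : ℝ) (N : ℕ) :
    ∑ j ∈ Finset.range (N + 1),
        (((hermite j).map (Int.castRingHom ℝ)).eval mu) ^ 2 / (Nat.factorial j) =
      (((N : ℝ) + 1) * (((hermite N).map (Int.castRingHom ℝ)).eval mu) ^ 2
        - mu * (((hermite N).map (Int.castRingHom ℝ)).eval mu)
            * (((hermite (N+1)).map (Int.castRingHom ℝ)).eval mu)
        + (((hermite (N+1)).map (Int.castRingHom ℝ)).eval mu) ^ 2) / (Nat.factorial N) := by
  induction N with
  | zero => simp [hermite_zero, hermite_one]; ring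
  | succ N ih =>
    rw [Finset.sum_range_succ, ih, hermite_eval_rec mu N]
    have h0 : (Nat.factorial N : ℝ) ≠ 0 := Nat.cast_ne_zero.mpr (Nat.factorial_ne_zero N)
    have h1 : (Nat.factorial (N+1) : ℝ) = ((N : ℝ) + 1) * Nat.factorial N := by
      rw [Nat.factorial_succ]; push_cast; ring
    rw [h1]
    have h2 : ((N:ℝ)+1) ≠ 0 := by positivity
    field_simp
    push_cast
    ring

/-- if `μ` is a root of `He_{N+1}` then
`Σ_{j=0}^{N} He_j(μ)²/j! = (N+1)·He_N(μ)²/N!`. -/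
theorem hermite_sum_identity_at_root (N : ℕ) (mu : ℝ)
    (hroot : ((Polynomial.hermite (N + 1)).map (Int.castRingHom ℝ)).eval mu = 0) :
    ∑ j ∈ Finset.range (N + 1),
        (((Polynomial.hermite j).map (Int.castRingHom ℝ)).eval mu) ^ 2 / (Nat.factorial j) =
      ((N : ℝ) + 1) * (((Polynomial.hermite N).map (Int.castRingHom ℝ)).eval mu) ^ 2 /
        (Nat.factorial N) := by
  rw [hermite_cd mu N, hroot]
  ring
end

section
/- For every natural number N there exists an (N+1)×(N+1) unitary complex matrix U such that U† Q_N U is a diagonal matrix and U† D_N U = I − J, where D_N = (Q_N P_N − P_N Q_N)/i, I is the identity matrix and J is the all-ones matrix. Thus the action difference, expressed in the position basis, has all diagonal entries 0 and all off-diagonal entries −1. -/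
open Matrix Polynomial

noncomputable def hp (μ : ℝ) : ℕ → ℝ
  | 0 => 1
  | 1 => Real.sqrt 2 * μ
  | (k+2) => (Real.sqrt 2 * μ * hp μ (k+1) - Real.sqrt (k+1) * hp μ k) / Real.sqrt (k+2)

lemma hp_rec (μ : ℝ) (k : ℕ) :
    Real.sqrt (k+1) * hp μ (k+1) = Real.sqrt 2 * μ * hp μ k - Real.sqrt k * hp μ (k-1) := by
  match k with
  | 0 => simp [hp]
  | (m+1) =>
    rw [show m+1-1 = m from rfl, show m+1+1 = m+2 from rfl, hp]
    push_cast
    rw [show ((m:ℝ)+1+1) = ((m:ℝ)+2) from by ring]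
    rw [mul_div_cancel₀ _ (by positivity)]

lemma hp_sumsq (μ : ℝ) (n : ℕ) :
    ∑ k ∈ Finset.range (n+1), (hp μ k)^2 =
      (n+1) * (hp μ n)^2 - Real.sqrt (n*(n+1)) * (hp μ (n-1) * hp μ (n+1)) := by
  induction n with
  | zero => simp [hp]
  | succ n ih =>
    rw [Finset.sum_range_succ, ih]
    have e1 := hp_rec μ n
    have e2 := hp_rec μ (n+1)
    have s1 : Real.sqrt n * Real.sqrt (n+1) = Real.sqrt (n*(n+1)) := by
      rw [← Real.sqrt_mul (by positivity)]
    have s2 : Real.sqrt (n+1) * Real.sqrt (n+2) = Real.sqrt ((n+1)*(n+2)) := by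
      rw [← Real.sqrt_mul (by positivity)]
    have s3 : Real.sqrt (n+1) * Real.sqrt (n+1) = (n+1 : ℝ) := by
      rw [Real.mul_self_sqrt (by positivity)]
    rw [show (n+1) - 1 = n from rfl, show (n+1) + 1 = n + 2 from rfl] at e2 ⊢
    push_cast at *
    rw [show ((n:ℝ)+1+1) = ((n:ℝ)+2) from by ring] at e2 ⊢
    linear_combination (hp μ (n-1) * hp μ (n+1)) * s1 - (hp μ n * hp μ (n+2)) * s2
      - (Real.sqrt (n+1) * hp μ (n+1)) * e1 + (Real.sqrt (n+1) * hp μ n) * e2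
      + (hp μ (n+1)^2 - hp μ n ^2) * s3
noncomputable def Amat (N : ℕ) : Matrix (Fin (N+1)) (Fin (N+1)) ℂ :=
  Matrix.of fun j k => if (j:ℕ) = (k:ℕ)+1 then (Real.sqrt ((k:ℕ)+1) : ℂ) else 0

lemma hQA (N : ℕ) : Qmat N = ((Real.sqrt 2 : ℝ) : ℂ)⁻¹ • (Amat N + (Amat N)ᵀ) := by
  ext j k
  simp only [Qmat, Amat, Matrix.of_apply, Matrix.smul_apply, Matrix.add_apply,
    Matrix.transpose_apply, smul_eq_mul]
  rw [one_div]
  split_ifs <;>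
    first
      | omega
      | (rename_i h; rw [h]; push_cast; ring_nf)
      | (push_cast; ring)

lemma hPA (N : ℕ) : Pmat N = (Complex.I * ((Real.sqrt 2 : ℝ) : ℂ)⁻¹) • (Amat N - (Amat N)ᵀ) := by
  ext j k
  simp only [Pmat, Amat, Matrix.of_apply, Matrix.smul_apply, Matrix.sub_apply,
    Matrix.transpose_apply, smul_eq_mul]
  rw [div_eq_mul_inv]
  split_ifs <;>
    first
      | omega
      | (rename_i h; rw [h]; push_cast; ring_nf)
      | (push_cast; ring)

lemma hATA (N : ℕ) : (Amat N)ᵀ * Amat N =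
    Matrix.of fun (j k : Fin (N+1)) => if (j:ℕ) = (k:ℕ) ∧ (j:ℕ) < N then ((j:ℕ)+1 : ℂ) else 0 := by
  ext j k
  rw [Matrix.mul_apply]
  simp only [Amat, Matrix.transpose_apply, Matrix.of_apply]
  by_cases hjk : (j:ℕ) = (k:ℕ) ∧ (j:ℕ) < N
  · rw [if_pos hjk]
    obtain ⟨hjk1, hjk2⟩ := hjk
    rw [Finset.sum_eq_single (⟨(j:ℕ)+1, by omega⟩ : Fin (N+1))]
    · have hv : ((⟨(j:ℕ)+1, by omega⟩ : Fin (N+1)) : ℕ) = (j:ℕ)+1 := rfl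
      rw [hv, if_pos rfl, if_pos (show (j:ℕ)+1 = (k:ℕ)+1 from by omega)]
      rw [hjk1, ← Complex.ofReal_mul, Real.mul_self_sqrt (by positivity)]
      push_cast; ring
    · intro b _ hb
      by_cases hb1 : (b:ℕ) = (j:ℕ)+1
      · exact absurd (Fin.ext hb1) hb
      · rw [if_neg hb1, zero_mul]
    · intro hmem; exact absurd (Finset.mem_univ _) hmem
  · rw [if_neg hjk]
    apply Finset.sum_eq_zero
    intro b _
    by_cases hb1 : (b:ℕ) = (j:ℕ)+1
    · by_cases hb2 : (b:ℕ) = (k:ℕ)+1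
      · exfalso; have := b.isLt; exact hjk ⟨by omega, by omega⟩
      · rw [if_neg hb2, mul_zero]
    · rw [if_neg hb1, zero_mul]

lemma hAAT (N : ℕ) : Amat N * (Amat N)ᵀ =
    Matrix.of fun (j k : Fin (N+1)) => if (j:ℕ) = (k:ℕ) then ((j:ℕ) : ℂ) else 0 := by
  ext j k
  rw [Matrix.mul_apply]
  simp only [Amat, Matrix.transpose_apply, Matrix.of_apply]
  by_cases hjk : (j:ℕ) = (k:ℕ) ∧ 1 ≤ (j:ℕ)
  · rw [if_pos hjk.1]
    obtain ⟨hjk1, hjk2⟩ := hjk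
    rw [Finset.sum_eq_single (⟨(j:ℕ)-1, by omega⟩ : Fin (N+1))]
    · have hv : ((⟨(j:ℕ)-1, by omega⟩ : Fin (N+1)) : ℕ) = (j:ℕ)-1 := rfl
      rw [hv, if_pos (show (j:ℕ) = (j:ℕ)-1+1 from by omega),
        if_pos (show (k:ℕ) = (j:ℕ)-1+1 from by omega)]
      rw [← Complex.ofReal_mul, Real.mul_self_sqrt (by positivity)]
      have hvv : ((j:ℕ) - 1 + 1 : ℕ) = (j:ℕ) := by omega
      exact_mod_cast congrArg (fun n : ℕ => (n:ℂ)) hvv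
    · intro b _ hb
      by_cases hb1 : (j:ℕ) = (b:ℕ)+1
      · exact absurd (Fin.ext (show (b:ℕ) = (j:ℕ)-1 from by omega)) hb
      · rw [if_neg hb1, zero_mul]
    · intro hmem; exact absurd (Finset.mem_univ _) hmem
  · have hz : ∀ b : Fin (N+1), (if (j:ℕ) = (b:ℕ)+1 then (Real.sqrt ((b:ℕ)+1):ℂ) else 0) *
        (if (k:ℕ) = (b:ℕ)+1 then (Real.sqrt ((b:ℕ)+1):ℂ) else 0) = 0 := by
      intro b
      by_cases hb1 : (j:ℕ) = (b:ℕ)+1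
      · have h1 : (j:ℕ) ≠ (k:ℕ) := fun hh => hjk ⟨hh, by omega⟩
        rw [if_neg (show ¬(k:ℕ) = (b:ℕ)+1 from fun hh => h1 (by omega)), mul_zero]
      · rw [if_neg hb1, zero_mul]
    rw [Finset.sum_eq_zero (fun b _ => hz b)]
    by_cases h : (j:ℕ) = (k:ℕ)
    · rw [if_pos h, show (j:ℕ) = 0 from by omega]; norm_num
    · rw [if_neg h]

lemma Dkey (N : ℕ) : Dmat N =
    1 - (((N:ℕ):ℂ)+1) • Matrix.of (fun (j k : Fin (N+1)) => if (j:ℕ) = N ∧ (k:ℕ) = N then (1:ℂ) else 0) := by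
  have hcomm : Qmat N * Pmat N - Pmat N * Qmat N
      = Complex.I • ((Amat N)ᵀ * Amat N - Amat N * (Amat N)ᵀ) := by
    have key : ∀ X Y : Matrix (Fin (N+1)) (Fin (N+1)) ℂ,
        (X + Y) * (X - Y) - (X - Y) * (X + Y) = (2:ℂ) • (Y * X - X * Y) := by
      intro X Y
      have h2 : (2:ℂ) • (Y * X - X * Y) = (Y*X - X*Y) + (Y*X - X*Y) := two_smul _ _
      rw [h2]; noncomm_ring
    have h22 : ((Real.sqrt 2 : ℝ):ℂ) * ((Real.sqrt 2 : ℝ):ℂ) = 2 := by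
      rw [← Complex.ofReal_mul, Real.mul_self_sqrt (by norm_num)]
      norm_num
    have hinv : ((Real.sqrt 2 : ℝ):ℂ)⁻¹ * ((Real.sqrt 2 : ℝ):ℂ)⁻¹ = (2:ℂ)⁻¹ := by
      rw [← mul_inv, h22]
    have hc : ((Real.sqrt 2 : ℝ):ℂ)⁻¹ * (Complex.I * ((Real.sqrt 2 : ℝ):ℂ)⁻¹)
        = Complex.I * ((Real.sqrt 2 : ℝ):ℂ)⁻¹ * ((Real.sqrt 2 : ℝ):ℂ)⁻¹ := by ring
    have hc2 : Complex.I * ((Real.sqrt 2 : ℝ):ℂ)⁻¹ * ((Real.sqrt 2 : ℝ):ℂ)⁻¹ * (2:ℂ)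
        = Complex.I := by
      rw [mul_assoc Complex.I, hinv, mul_assoc, inv_mul_cancel₀ two_ne_zero, mul_one]
    rw [hQA, hPA]
    rw [Matrix.smul_mul, Matrix.mul_smul, Matrix.smul_mul, Matrix.mul_smul]
    rw [smul_smul, smul_smul, hc, ← smul_sub, key, smul_smul, hc2]
  rw [Dmat, hcomm, smul_smul, inv_mul_cancel₀ Complex.I_ne_zero, one_smul]
  rw [hATA, hAAT]
  ext j k
  simp only [Matrix.sub_apply, Matrix.of_apply, Matrix.smul_apply, Matrix.one_apply, smul_eq_mul]
  have hj := j.isLt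
  have hk := k.isLt
  by_cases hjk : j = k
  · subst hjk
    by_cases hN : (j:ℕ) = N
    · rw [if_neg (show ¬((j:ℕ) = (j:ℕ) ∧ (j:ℕ) < N) from by omega), if_pos rfl, if_pos rfl,
        if_pos ⟨hN, hN⟩, hN]
      push_cast; ring
    · rw [if_pos ⟨rfl, by omega⟩, if_pos rfl, if_pos rfl, if_neg (by tauto)]
      push_cast; ring
  · have hjk2 : (j:ℕ) ≠ (k:ℕ) := fun h => hjk (Fin.ext h)
    rw [if_neg (by tauto), if_neg hjk2, if_neg hjk, if_neg (by omega)]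
    ring

lemma sqrt2C_ne : ((Real.sqrt 2 : ℝ):ℂ) ≠ 0 := by
  simp only [ne_eq, Complex.ofReal_eq_zero]
  positivity

lemma fin_sum_at (n : ℕ) (f : Fin n → ℂ) (m : ℕ) :
    (∑ b : Fin n, if m = (b:ℕ) then f b else 0) = if h : m < n then f ⟨m, h⟩ else 0 := by
  by_cases h : m < n
  · rw [dif_pos h, Finset.sum_eq_single (⟨m, h⟩ : Fin n)]
    · rw [if_pos rfl]
    · intro b _ hb
      rw [if_neg (fun hc => hb (Fin.ext (by exact hc.symm)))]
    · intro hmem; exact absurd (Finset.mem_univ _) hmem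
  · rw [dif_neg h, Finset.sum_eq_zero]
    intro b _
    rw [if_neg (fun hc => h (by have := b.isLt; omega))]

lemma fin_sum_shift (n : ℕ) (f : Fin n → ℂ) (m : ℕ) :
    (∑ b : Fin n, if m = (b:ℕ)+1 then f b else 0)
      = if h : m - 1 < n ∧ 1 ≤ m then f ⟨m-1, h.1⟩ else 0 := by
  by_cases h : m - 1 < n ∧ 1 ≤ m
  · rw [dif_pos h, Finset.sum_eq_single (⟨m-1, h.1⟩ : Fin n)]
    · rw [if_pos (by simp only [Fin.val_mk]; omega)]
    · intro b _ hb
      rw [if_neg (fun hc => hb (Fin.ext (by simp only [Fin.val_mk]; omega)))]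
    · intro hmem; exact absurd (Finset.mem_univ _) hmem
  · rw [dif_neg h, Finset.sum_eq_zero]
    intro b _
    rw [if_neg (fun hc => h (by have := b.isLt; constructor <;> omega))]

lemma key_lemma (N : ℕ) (μ : ℝ) (v : Fin (N+1) → ℂ)
    (heig : ∀ a : Fin (N+1), ∑ b, Qmat N a b * v b = (μ:ℂ) * v a)
    (hnorm : ∑ a, (starRingEnd ℂ) (v a) * v a = 1) :
    Complex.normSq (v (Fin.last N)) = 1/(N+1) := by
  classical
  obtain ⟨w, hwv, hwz⟩ : ∃ w : ℕ → ℂ,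
      (∀ (k : ℕ) (h : k < N+1), w k = v ⟨k, h⟩) ∧ (∀ k, N < k → w k = 0) := by
    refine ⟨fun k => if h : k < N+1 then v ⟨k, h⟩ else 0, ?_, ?_⟩
    · intro k h; exact dif_pos h
    · intro k h; exact dif_neg (by omega)
  have hrow : ∀ k : ℕ, k ≤ N → (μ:ℂ) * w k =
      ((Real.sqrt 2 : ℝ):ℂ)⁻¹ * ((Real.sqrt k : ℂ) * w (k-1) + (Real.sqrt (k+1) : ℂ) * w (k+1)) := by
    intro k hk
    have hk' : k < N+1 := by omega
    have h0 := heig ⟨k, hk'⟩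
    have hQab : ∀ b : Fin (N+1), Qmat N ⟨k,hk'⟩ b * v b
        = ((Real.sqrt 2:ℝ):ℂ)⁻¹ *
            ((if k = (b:ℕ)+1 then (Real.sqrt ((b:ℕ)+1):ℂ) * v b else 0)
              + (if k+1 = (b:ℕ) then (Real.sqrt (b:ℕ):ℂ) * v b else 0)) := by
      intro b
      simp only [Qmat, Matrix.of_apply, Fin.val_mk]
      split_ifs <;> (push_cast; ring)
    rw [Finset.sum_congr rfl (fun b _ => hQab b), ← Finset.mul_sum,
      Finset.sum_add_distrib, fin_sum_at, fin_sum_shift] at h0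
    rw [← hwv k hk'] at h0
    rw [← h0]
    congr 1
    congr 1
    · by_cases h1 : 1 ≤ k
      · rw [dif_pos ⟨by omega, h1⟩, hwv (k-1) (by omega)]
        simp only [Fin.val_mk]
        norm_cast
        rw [Nat.sub_add_cancel h1]
      · have : k = 0 := by omega
        subst this
        rw [dif_neg (by omega)]
        simp
    · by_cases h2 : k+1 < N+1
      · rw [dif_pos h2, hwv (k+1) h2]
        simp only [Fin.val_mk]
        push_cast
        ring_nf
      · rw [dif_neg h2, hwz (k+1) (by omega), mul_zero]
  have hw : ∀ k : ℕ, k ≤ N → w k = w 0 * (hp μ k : ℂ) := by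
    intro k
    induction k using Nat.strong_induction_on with
    | _ k ih =>
      match k with
      | 0 => intro _; simp [hp]
      | 1 =>
        intro h1
        have h := hrow 0 (by omega)
        rw [show (0:ℕ)-1 = 0 from rfl] at h
        simp only [Nat.cast_zero, Real.sqrt_zero, Complex.ofReal_zero, zero_mul, zero_add,
          Nat.cast_one, zero_add, Real.sqrt_one, Complex.ofReal_one, one_mul] at h
        have hs : ((Real.sqrt 2:ℝ):ℂ) * ((Real.sqrt 2:ℝ):ℂ)⁻¹ = 1 := mul_inv_cancel₀ sqrt2C_ne
        rw [hp]
        push_cast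
        linear_combination (-((Real.sqrt 2:ℝ):ℂ)) * h - w 1 * hs
      | (m+2) =>
        intro hm2
        have h := hrow (m+1) (by omega)
        rw [show (m+1)-1 = m from rfl] at h
        have ihm : w m = w 0 * (hp μ m : ℂ) := ih m (by omega) (by omega)
        have ihm1 : w (m+1) = w 0 * (hp μ (m+1) : ℂ) := ih (m+1) (by omega) (by omega)
        rw [ihm, ihm1] at h
        have hs : ((Real.sqrt 2:ℝ):ℂ) * ((Real.sqrt 2:ℝ):ℂ)⁻¹ = 1 := mul_inv_cancel₀ sqrt2C_ne
        rw [hp]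
        have hsm2 : ((Real.sqrt ((m:ℝ)+2) : ℝ):ℂ) ≠ 0 := by
          simp only [ne_eq, Complex.ofReal_eq_zero]
          positivity
        push_cast
        push_cast at h
        rw [show ((m:ℝ)+1+1) = ((m:ℝ)+2) from by ring] at h
        rw [← mul_div_assoc, eq_div_iff hsm2]
        linear_combination (-((Real.sqrt 2:ℝ):ℂ)) * h
          + (-(((Real.sqrt ((m:ℝ)+1) : ℝ):ℂ) * (w 0 * ((hp μ m : ℝ):ℂ))
              + ((Real.sqrt ((m:ℝ)+2) : ℝ):ℂ) * w (m+2))) * hs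
  have hlast : w N = v (Fin.last N) := hwv N (Nat.lt_succ_self N)
  have hw0 : w 0 ≠ 0 := by
    intro h0
    have hz : ∀ a : Fin (N+1), v a = 0 := by
      intro a
      calc v a = w (a:ℕ) := (hwv _ a.isLt).symm
        _ = w 0 * (hp μ (a:ℕ) : ℂ) := hw _ (by have := a.isLt; omega)
        _ = 0 := by rw [h0, zero_mul]
    rw [Finset.sum_congr rfl (fun a _ => by rw [hz a, mul_zero])] at hnorm
    simp at hnorm
  have hroot : hp μ (N+1) = 0 := by
    have h := hrow N (le_refl N)
    rw [hwz (N+1) (by omega), hw N (le_refl N), hw (N-1) (by omega)] at h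
    have hrec := hp_rec μ N
    have hC : (w 0) * ((Real.sqrt (N+1) * hp μ (N+1) : ℝ) : ℂ) = 0 := by
      have hs : ((Real.sqrt 2:ℝ):ℂ) * ((Real.sqrt 2:ℝ):ℂ)⁻¹ = 1 := mul_inv_cancel₀ sqrt2C_ne
      push_cast [hrec]
      push_cast at h
      linear_combination ((Real.sqrt 2:ℝ):ℂ) * h
        + (((Real.sqrt ((N:ℝ)) : ℝ):ℂ) * (w 0 * ((hp μ (N-1) : ℝ):ℂ))) * hs
    rcases mul_eq_zero.mp hC with h' | h'
    · exact absurd h' hw0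
    · have hR : Real.sqrt (N+1) * hp μ (N+1) = 0 := by exact_mod_cast h'
      rcases mul_eq_zero.mp hR with h'' | h''
      · exact absurd h'' (by positivity)
      · exact h''
  have hsum := hp_sumsq μ N
  rw [hroot] at hsum
  rw [mul_zero, mul_zero, sub_zero] at hsum
  have hterm : ∀ a : Fin (N+1), (starRingEnd ℂ) (v a) * v a
      = ((Complex.normSq (w 0) * hp μ (a:ℕ)^2 : ℝ) : ℂ) := by
    intro a
    have hva : v a = w 0 * (hp μ (a:ℕ) : ℂ) := by
      rw [← hwv _ a.isLt]; exact hw _ (by have := a.isLt; omega)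
    rw [hva, _root_.map_mul, Complex.conj_ofReal]
    have hcj : (starRingEnd ℂ) (w 0) * w 0 = (Complex.normSq (w 0) : ℂ) := by
      rw [mul_comm, Complex.mul_conj]
    push_cast
    linear_combination ((hp μ (a:ℕ) : ℂ))^2 * hcj
  have hnorm2 : Complex.normSq (w 0) * ((N+1) * hp μ N^2) = 1 := by
    rw [Finset.sum_congr rfl (fun a _ => hterm a)] at hnorm
    have hcast : ∑ a : Fin (N+1), ((Complex.normSq (w 0) * hp μ (a:ℕ)^2 : ℝ) : ℂ)
        = ((Complex.normSq (w 0) * ∑ k ∈ Finset.range (N+1), hp μ k^2 : ℝ) : ℂ) := by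
      rw [Fin.sum_univ_eq_sum_range (fun k => ((Complex.normSq (w 0) * hp μ k^2 : ℝ) : ℂ))]
      push_cast
      rw [Finset.mul_sum]
    rw [hcast] at hnorm
    have : Complex.normSq (w 0) * ∑ k ∈ Finset.range (N+1), hp μ k^2 = 1 := by
      exact_mod_cast hnorm
    rw [hsum] at this
    exact_mod_cast this
  have hlastval : Complex.normSq (v (Fin.last N)) = Complex.normSq (w 0) * hp μ N^2 := by
    rw [← hlast, hw N (le_refl N), Complex.normSq_mul, Complex.normSq_ofReal]
    ring
  rw [hlastval]
  have hN1 : ((N:ℝ)+1) ≠ 0 := by positivity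
  rw [eq_div_iff (by push_cast; exact hN1)]
  push_cast
  linear_combination hnorm2

lemma hAH (N : ℕ) : (Amat N)ᴴ = (Amat N)ᵀ := by
  ext j k
  simp only [Matrix.conjTranspose_apply, Matrix.transpose_apply, Amat, Matrix.of_apply]
  split_ifs <;> simp [Complex.conj_ofReal]

lemma Qsymm (N : ℕ) (j k : Fin (N+1)) : Qmat N j k = Qmat N k j := by
  rw [hQA]
  simp only [Matrix.smul_apply, Matrix.add_apply, Matrix.transpose_apply, smul_eq_mul]
  ring

lemma Qherm (N : ℕ) : (Qmat N).IsHermitian := by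
  show (Qmat N)ᴴ = Qmat N
  ext j k
  rw [Matrix.conjTranspose_apply, Qsymm N k j]
  simp [Qmat, RCLike.star_def, Complex.conj_ofReal]

/-- there is a unitary `U` diagonalizing `Q_N` such that the action
difference in the position basis is `U† D_N U = I − J` (zero diagonal, `−1` off-diagonal). -/
theorem action_difference_position_basis (N : ℕ) :
    ∃ U : Matrix (Fin (N+1)) (Fin (N+1)) ℂ,
      Uᴴ * U = 1 ∧ U * Uᴴ = 1 ∧
      (∃ d : Fin (N+1) → ℂ, Uᴴ * Qmat N * U = Matrix.diagonal d) ∧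
      Uᴴ * Dmat N * U =
        (1 : Matrix (Fin (N+1)) (Fin (N+1)) ℂ) - Matrix.of (fun _ _ => (1 : ℂ)) := by
  classical
  have hherm := Qherm N
  set V : Matrix (Fin (N+1)) (Fin (N+1)) ℂ := (hherm.eigenvectorUnitary : Matrix (Fin (N+1)) (Fin (N+1)) ℂ) with hV
  have hVsV : Vᴴ * V = 1 := by
    rw [← Matrix.star_eq_conjTranspose]
    exact Matrix.mem_unitaryGroup_iff'.mp hherm.eigenvectorUnitary.2
  have hVVs : V * Vᴴ = 1 := by
    rw [← Matrix.star_eq_conjTranspose]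
    exact Matrix.mem_unitaryGroup_iff.mp hherm.eigenvectorUnitary.2
  have hVdiag : Vᴴ * Qmat N * V = Matrix.diagonal (fun i => ((hherm.eigenvalues i : ℝ) : ℂ)) :=
    by have h := hherm.conjStarAlgAut_star_eigenvectorUnitary
       rw [Unitary.conjStarAlgAut_star_apply] at h
       exact h
  have hQV : Qmat N * V = V * Matrix.diagonal (fun i => ((hherm.eigenvalues i : ℝ) : ℂ)) := by
    have h := congrArg (fun M => V * M) hVdiag
    beta_reduce at h
    rw [← Matrix.mul_assoc, ← Matrix.mul_assoc, hVVs, Matrix.one_mul] at h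
    exact h
  have hkey : ∀ i, Complex.normSq (V (Fin.last N) i) = 1/(N+1) := by
    intro i
    apply key_lemma N (hherm.eigenvalues i) (fun a => V a i)
    · intro a
      have h := congrFun (congrFun hQV a) i
      rw [Matrix.mul_apply] at h
      rw [h, Matrix.mul_diagonal]
      ring
    · have h := congrFun (congrFun hVsV i) i
      rw [Matrix.mul_apply] at h
      simp only [Matrix.one_apply_eq] at h
      rw [← h]
      apply Finset.sum_congr rfl
      intro a _
      rw [Matrix.conjTranspose_apply]
      rfl
  -- the phase-corrected unitary
  have hVne : ∀ i, V (Fin.last N) i ≠ 0 := by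
    intro i h0
    have := hkey i
    rw [h0] at this
    simp only [map_zero] at this
    have hpos : (0:ℝ) < 1/(N+1) := by positivity
    rw [← this] at hpos
    exact lt_irrefl _ hpos
  set c : Fin (N+1) → ℂ := fun i =>
    ((‖V (Fin.last N) i‖ : ℝ) : ℂ) / V (Fin.last N) i with hc
  have hcc : ∀ i, (starRingEnd ℂ) (c i) * c i = 1 := by
    intro i
    set z := V (Fin.last N) i with hz
    rw [hc]
    simp only [map_div₀, Complex.conj_ofReal]
    rw [div_mul_div_comm, ← Complex.ofReal_mul, (by rw [← sq, ← Complex.normSq_eq_norm_sq] : ‖z‖ * ‖z‖ = Complex.normSq z)]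
    rw [mul_comm ((starRingEnd ℂ) z) z, Complex.mul_conj]
    rw [div_self]
    simp only [ne_eq, Complex.ofReal_eq_zero]
    exact fun hcon => hVne i (Complex.normSq_eq_zero.mp hcon)
  set U : Matrix (Fin (N+1)) (Fin (N+1)) ℂ := V * Matrix.diagonal c with hU
  have hstarc1 : (fun i => star (c i) * c i) = fun _ : Fin (N+1) => (1:ℂ) :=
    funext fun i => by simpa using hcc i
  have hcstar1 : (fun i => c i * star (c i)) = fun _ : Fin (N+1) => (1:ℂ) :=
    funext fun i => by rw [mul_comm]; simpa using hcc i
  have hdiag1 : Matrix.diagonal (fun _ : Fin (N+1) => (1:ℂ)) = 1 := Matrix.diagonal_one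
  have hUHU : Uᴴ * U = 1 := by
    rw [hU, Matrix.conjTranspose_mul, Matrix.diagonal_conjTranspose,
      Matrix.mul_assoc (Matrix.diagonal (star c)) Vᴴ _, ← Matrix.mul_assoc Vᴴ V _, hVsV,
      Matrix.one_mul, Matrix.diagonal_mul_diagonal]
    rw [show (fun i => star c i * c i) = fun _ : Fin (N+1) => (1:ℂ) from hstarc1]
    exact hdiag1
  have hUUH : U * Uᴴ = 1 := by
    rw [hU, Matrix.conjTranspose_mul, Matrix.diagonal_conjTranspose,
      Matrix.mul_assoc V _ _, ← Matrix.mul_assoc (Matrix.diagonal c) (Matrix.diagonal (star c)) Vᴴ,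
      Matrix.diagonal_mul_diagonal]
    rw [show (fun i => c i * star c i) = fun _ : Fin (N+1) => (1:ℂ) from hcstar1]
    rw [hdiag1, Matrix.one_mul]
    exact hVVs
  have hQdiag : Uᴴ * Qmat N * U =
      Matrix.diagonal (fun i => star (c i) * ((hherm.eigenvalues i : ℝ):ℂ) * c i) := by
    rw [hU, Matrix.conjTranspose_mul, Matrix.diagonal_conjTranspose]
    rw [Matrix.mul_assoc (Matrix.diagonal (star c) * Vᴴ) (Qmat N) (V * Matrix.diagonal c)]
    rw [← Matrix.mul_assoc (Qmat N) V (Matrix.diagonal c), hQV]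
    rw [← Matrix.mul_assoc (Matrix.diagonal (star c) * Vᴴ) _ (Matrix.diagonal c)]
    rw [← Matrix.mul_assoc (Matrix.diagonal (star c) * Vᴴ) V _]
    rw [Matrix.mul_assoc (Matrix.diagonal (star c)) Vᴴ V, hVsV, Matrix.mul_one]
    rw [Matrix.diagonal_mul_diagonal, Matrix.diagonal_mul_diagonal]
    rfl
  refine ⟨U, hUHU, hUUH, ⟨_, hQdiag⟩, ?_⟩
  have hUlast : ∀ i, U (Fin.last N) i = ((‖V (Fin.last N) i‖ : ℝ) : ℂ) := by
    intro i
    rw [hU, Matrix.mul_diagonal, hc]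
    rw [mul_comm, div_mul_cancel₀ _ (hVne i)]
  set E : Matrix (Fin (N+1)) (Fin (N+1)) ℂ :=
    Matrix.of (fun (j k : Fin (N+1)) => if (j:ℕ) = N ∧ (k:ℕ) = N then (1:ℂ) else 0) with hE
  have hE1 : ∀ a t : Fin (N+1), (Uᴴ * E) a t
      = if (t:ℕ) = N then (starRingEnd ℂ) (U (Fin.last N) a) else 0 := by
    intro a t
    rw [Matrix.mul_apply]
    by_cases ht : (t:ℕ) = N
    · rw [if_pos ht, Finset.sum_eq_single (Fin.last N)]
      · rw [Matrix.conjTranspose_apply, hE]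
        simp only [Matrix.of_apply]
        rw [if_pos ⟨Fin.val_last N, ht⟩, mul_one]
        rfl
      · intro b _ hb
        rw [hE]
        simp only [Matrix.of_apply]
        rw [if_neg (fun hcon => hb (Fin.ext (by rw [hcon.1, Fin.val_last]))), mul_zero]
      · intro hmem; exact absurd (Finset.mem_univ _) hmem
    · rw [if_neg ht, Finset.sum_eq_zero]
      intro b _
      rw [hE]
      simp only [Matrix.of_apply]
      rw [if_neg (fun hcon => ht hcon.2), mul_zero]
  have hE2 : ∀ a b : Fin (N+1), (Uᴴ * E * U) a b
      = (starRingEnd ℂ) (U (Fin.last N) a) * U (Fin.last N) b := by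
    intro a b
    rw [Matrix.mul_apply, Finset.sum_eq_single (Fin.last N)]
    · rw [hE1, if_pos (Fin.val_last N)]
    · intro t _ ht
      rw [hE1, if_neg (fun hcon => ht (Fin.ext (by rw [hcon, Fin.val_last]))), zero_mul]
    · intro hmem; exact absurd (Finset.mem_univ _) hmem
  have habs : ∀ i, ‖V (Fin.last N) i‖ = Real.sqrt (1/(N+1)) := by
    intro i
    rw [Complex.norm_def, hkey i]
  rw [Dkey]
  have hsplit : Uᴴ * (1 - (((N:ℕ):ℂ)+1) • E) * U = Uᴴ * U - (((N:ℕ):ℂ)+1) • (Uᴴ * E * U) := by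
    rw [Matrix.mul_sub, Matrix.sub_mul, Matrix.mul_one, Matrix.mul_smul, Matrix.smul_mul]
  rw [hsplit, hUHU]
  congr 1
  ext a b
  rw [Matrix.smul_apply, hE2 a b, hUlast, hUlast, Complex.conj_ofReal, habs, habs,
    ← Complex.ofReal_mul, Real.mul_self_sqrt (by positivity)]
  rw [Matrix.of_apply]
  rw [smul_eq_mul]
  have hne : ((N:ℝ)+1) ≠ 0 := by positivity
  have hneC : ((N:ℂ)+1) ≠ 0 := by
    intro hcon
    rw [show ((N:ℂ)+1) = (((N:ℝ)+1 : ℝ) : ℂ) from by push_cast; ring] at hcon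
    exact hne (by exact_mod_cast hcon)
  push_cast
  field_simp
end
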